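/- arXiv:1208.4272 — 9 statements merged into one kernel-verified Lean document; each statement's English description precedes it below -/
import Mathlib

section
/- Let K be a compact metric space and let C(K) be the Banach space of continuous real-valued functions on K with the supremum norm. Let k ≥ 1 be an integer and let X and Y be Borel measurable C(K)-valued random variables on a probability space with E‖X‖^k < ∞ and E‖Y‖^k < ∞. Then the following are equivalent: (a) E α(X,…,X) = E α(Y,…,Y) for every bounded k-linear form α on C(K); (b) E(x₁*(X)⋯x_k*(X)) = E(x₁*(Y)⋯x_k*(Y)) for all continuous linear functionals x₁*,…,x_k* on C(K); (c) E(X(t₁)⋯X(t_k)) = E(Y(t₁)⋯Y(t_k)) for all points t₁,…,t_k ∈ K. -/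
open MeasureTheory Filter
open scoped BigOperators ENNReal Topology

set_option linter.unusedSectionVars false
set_option linter.deprecated false

section CKaux
variable {K : Type*} [MetricSpace K] [CompactSpace K]
  [MeasurableSpace (ContinuousMap K ℝ)] [BorelSpace (ContinuousMap K ℝ)]
  {Ω : Type*} [MeasurableSpace Ω] {μ : Measure Ω} [IsProbabilityMeasure μ]
  {k : ℕ} {X Y : Ω → ContinuousMap K ℝ}

/-- A finite "partition of unity" subordinate to balls of radius `ε`. -/
lemma CK_exists_partition (ε : ℝ) (hε : 0 < ε) :
    ∃ (s : Finset K) (φ : K → C(K, ℝ)),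
      (∀ j x, 0 ≤ φ j x) ∧ (∀ x : K, ∑ j ∈ s, φ j x = 1) ∧
      (∀ j ∈ s, ∀ x : K, φ j x ≠ 0 → dist x j < ε) := by
  obtain ⟨s, hs⟩ := isCompact_univ.elim_finite_subcover
    (fun t : K => Metric.ball t ε) (fun _ => Metric.isOpen_ball)
    (fun x _ => Set.mem_iUnion.2 ⟨x, Metric.mem_ball_self hε⟩)
  set ψ : K → K → ℝ := fun j x => max (ε - dist x j) 0 with hψ
  have hψc : ∀ j, Continuous (ψ j) := fun j =>
    ((continuous_const.sub (continuous_id.dist continuous_const)).max continuous_const)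
  have hψ0 : ∀ j x, 0 ≤ ψ j x := fun j x => le_max_right _ _
  set S : K → ℝ := fun x => ∑ j ∈ s, ψ j x with hS
  have hSc : Continuous S := continuous_finset_sum _ fun j _ => hψc j
  have hSpos : ∀ x, 0 < S x := by
    intro x
    obtain ⟨j, hj, hxj⟩ := Set.mem_iUnion₂.1 (hs (Set.mem_univ x))
    have : 0 < ψ j x := lt_max_of_lt_left (by
      simpa [sub_pos] using (Metric.mem_ball.1 hxj))
    exact Finset.sum_pos' (fun i _ => hψ0 i x) ⟨j, hj, this⟩
  refine ⟨s, fun j => ⟨fun x => ψ j x / S x, (hψc j).div hSc (fun x => (hSpos x).ne')⟩,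
    fun j x => div_nonneg (hψ0 j x) (hSpos x).le, ?_, ?_⟩
  · intro x
    simp only [ContinuousMap.coe_mk]
    rw [← Finset.sum_div]
    exact div_self (hSpos x).ne'
  · intro j hj x hx
    simp only [ContinuousMap.coe_mk] at hx
    have hne : ψ j x ≠ 0 := fun h => hx (by simp [h])
    by_contra hge
    push_neg at hge
    exact hne (by simp [hψ, max_eq_right, sub_nonpos.2 hge])


lemma CK_integrable_prod_eval (hX : Measurable X)
    (hXk : Integrable (fun ω => ‖X ω‖ ^ k) μ) (t : Fin k → K) :
    Integrable (fun ω => ∏ i, X ω (t i)) μ := by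
  refine Integrable.mono hXk ?_ ?_
  · exact (Finset.measurable_prod _ fun i _ =>
      ((continuous_eval_const (t i)).measurable.comp hX)).aestronglyMeasurable
  · refine Filter.Eventually.of_forall fun ω => ?_
    have h1 : ‖∏ i, X ω (t i)‖ ≤ ∏ i : Fin k, ‖X ω‖ := by
      rw [norm_prod]
      exact Finset.prod_le_prod (fun i _ => norm_nonneg _)
        (fun i _ => (X ω).norm_coe_le_norm (t i))
    simpa [Real.norm_eq_abs, abs_of_nonneg (pow_nonneg (norm_nonneg (X ω)) k)]
      using h1.trans_eq (by simp)

lemma CK_key (hX : Measurable X) (hY : Measurable Y)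
    (hXk : Integrable (fun ω => ‖X ω‖ ^ k) μ)
    (hYk : Integrable (fun ω => ‖Y ω‖ ^ k) μ)
    (hpt : ∀ t : Fin k → K,
      ∫ ω, (∏ i, X ω (t i)) ∂μ = ∫ ω, (∏ i, Y ω (t i)) ∂μ)
    (α : ContinuousMultilinearMap ℝ (fun _ : Fin k => ContinuousMap K ℝ) ℝ) :
    ∫ ω, α (fun _ => X ω) ∂μ = ∫ ω, α (fun _ => Y ω) ∂μ := by
  classical
  -- choose partitions of unity for ε = 1/(n+1)
  have hpart := fun n : ℕ => CK_exists_partition (K := K) (1 / (n + 1 : ℝ))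
    (by positivity)
  choose s φ hφ0 hφsum hφsupp using hpart
  -- the approximation operators
  set T : ℕ → ContinuousMap K ℝ → ContinuousMap K ℝ :=
    fun n f => ∑ j ∈ s n, f j • φ n j with hT
  have hTval : ∀ n f x, T n f x = ∑ j ∈ s n, f j * φ n j x := by
    intro n f x
    simp [hT]
  -- norm bound
  have hTnorm : ∀ n (f : ContinuousMap K ℝ), ‖T n f‖ ≤ ‖f‖ := by
    intro n f
    rw [ContinuousMap.norm_le _ (norm_nonneg f)]
    intro x
    rw [hTval]
    calc ‖∑ j ∈ s n, f j * φ n j x‖ ≤ ∑ j ∈ s n, ‖f j * φ n j x‖ :=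
          norm_sum_le _ _
      _ ≤ ∑ j ∈ s n, ‖f‖ * φ n j x := by
          refine Finset.sum_le_sum fun j _ => ?_
          rw [norm_mul, Real.norm_eq_abs (φ n j x), abs_of_nonneg (hφ0 n j x)]
          exact mul_le_mul_of_nonneg_right (f.norm_coe_le_norm j) (hφ0 n j x)
      _ = ‖f‖ := by rw [← Finset.mul_sum, hφsum n x, mul_one]
  -- convergence
  have hTtend : ∀ f : ContinuousMap K ℝ, Tendsto (fun n => T n f) atTop (𝓝 f) := by
    intro f
    rw [Metric.tendsto_atTop]
    intro ε hε
    have huc : UniformContinuous (f : K → ℝ) :=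
      CompactSpace.uniformContinuous_of_continuous f.continuous
    obtain ⟨δ, hδ, hδ'⟩ := Metric.uniformContinuous_iff.1 huc (ε / 2) (by positivity)
    obtain ⟨N, hN⟩ := exists_nat_one_div_lt hδ
    refine ⟨N, fun n hn => ?_⟩
    have hεn : 1 / (n + 1 : ℝ) < δ := by
      calc (1 : ℝ) / (n + 1) ≤ 1 / (N + 1) := by
            apply one_div_le_one_div_of_le (by positivity)
            exact_mod_cast by omega
        _ < δ := hN
    rw [dist_eq_norm]
    have hb : ‖T n f - f‖ ≤ ε / 2 := by
      rw [ContinuousMap.norm_le _ (by positivity)]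
      intro x
      have hx : (T n f - f) x = ∑ j ∈ s n, (f j - f x) * φ n j x := by
        simp only [ContinuousMap.sub_apply, hTval, sub_mul, Finset.sum_sub_distrib,
          ← Finset.mul_sum]
        rw [hφsum n x, mul_one]
      rw [hx]
      calc ‖∑ j ∈ s n, (f j - f x) * φ n j x‖
          ≤ ∑ j ∈ s n, ‖(f j - f x) * φ n j x‖ := norm_sum_le _ _
        _ ≤ ∑ j ∈ s n, (ε / 2) * φ n j x := by
            refine Finset.sum_le_sum fun j hj => ?_
            rcases eq_or_ne (φ n j x) 0 with h0 | h0
            · simp [h0]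
            · rw [norm_mul, Real.norm_eq_abs (φ n j x), abs_of_nonneg (hφ0 n j x)]
              refine mul_le_mul_of_nonneg_right ?_ (hφ0 n j x)
              have hd : dist x j < δ := (hφsupp n j hj x h0).trans hεn
              have := hδ' hd
              rw [Real.dist_eq] at this
              rw [Real.norm_eq_abs, abs_sub_comm]
              exact this.le
        _ = ε / 2 := by rw [← Finset.mul_sum, hφsum n x, mul_one]
    linarith [hb]
  -- the integral of the approximations as a finite sum of pointwise moments
  have hswap : ∀ (Z : Ω → ContinuousMap K ℝ), Measurable Z →
      Integrable (fun ω => ‖Z ω‖ ^ k) μ → ∀ n,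
      ∫ ω, α (fun _ => T n (Z ω)) ∂μ
        = ∑ r ∈ Fintype.piFinset (fun _ : Fin k => s n),
            (∫ ω, ∏ i, Z ω (r i) ∂μ) * α (fun i => φ n (r i)) := by
    intro Z hZ hZk n
    have h1 : ∀ ω, α (fun _ => T n (Z ω))
        = ∑ r ∈ Fintype.piFinset (fun _ : Fin k => s n),
            (∏ i, Z ω (r i)) * α (fun i => φ n (r i)) := by
      intro ω
      have : (fun _ : Fin k => T n (Z ω))
          = fun _ : Fin k => ∑ j ∈ s n, (Z ω) j • φ n j := rfl
      rw [this, α.map_sum_finset (fun _ j => (Z ω) j • φ n j) (fun _ => s n)]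
      refine Finset.sum_congr rfl fun r _ => ?_
      rw [α.map_smul_univ (fun i => (Z ω) (r i)) (fun i => φ n (r i))]
      rw [smul_eq_mul]
    simp only [h1]
    rw [integral_finset_sum _ (fun r _ => (CK_integrable_prod_eval hZ hZk r).mul_const _)]
    exact Finset.sum_congr rfl fun r _ => integral_mul_const _ _
  -- dominated convergence
  have hdom : ∀ (Z : Ω → ContinuousMap K ℝ), Measurable Z →
      Integrable (fun ω => ‖Z ω‖ ^ k) μ →
      Tendsto (fun n => ∫ ω, α (fun _ => T n (Z ω)) ∂μ) atTop
        (𝓝 (∫ ω, α (fun _ => Z ω) ∂μ)) := by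
    intro Z hZ hZk
    refine tendsto_integral_of_dominated_convergence (fun ω => ‖α‖ * ‖Z ω‖ ^ k) ?_ ?_ ?_ ?_
    · intro n
      have hTc : Continuous (T n) := continuous_finset_sum _ fun j _ =>
        (ContinuousEvalConst.continuous_eval_const j).smul (g := fun _ : ContinuousMap K ℝ => φ n j) continuous_const
      have hcont : Continuous fun f : ContinuousMap K ℝ => α (fun _ => T n f) :=
        (α.cont.comp (continuous_pi fun _ => continuous_id)).comp hTc
      exact (hcont.measurable.comp hZ).aestronglyMeasurable
    · exact hZk.const_mul _
    · intro n
      refine Filter.Eventually.of_forall fun ω => ?_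
      have hb1 : ‖α (fun _ => T n (Z ω))‖ ≤ ‖α‖ * ∏ _i : Fin k, ‖T n (Z ω)‖ :=
        α.le_opNorm _
      have hb2 : (∏ _i : Fin k, ‖T n (Z ω)‖) ≤ ‖Z ω‖ ^ k := by
        rw [Finset.prod_const, Finset.card_univ, Fintype.card_fin]
        exact pow_le_pow_left₀ (norm_nonneg _) (hTnorm n (Z ω)) k
      calc ‖α (fun _ => T n (Z ω))‖ ≤ ‖α‖ * ∏ _i : Fin k, ‖T n (Z ω)‖ := hb1
        _ ≤ ‖α‖ * ‖Z ω‖ ^ k := mul_le_mul_of_nonneg_left hb2 (norm_nonneg α)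
    · refine Filter.Eventually.of_forall fun ω => ?_
      have hc : Continuous fun f : ContinuousMap K ℝ => α (fun _ => f) :=
        α.cont.comp (continuous_pi fun _ => continuous_id)
      exact ((hc.tendsto (Z ω)).comp (hTtend (Z ω)) : _)
  have heq : ∀ n, ∫ ω, α (fun _ => T n (X ω)) ∂μ = ∫ ω, α (fun _ => T n (Y ω)) ∂μ := by
    intro n
    rw [hswap X hX hXk n, hswap Y hY hYk n]
    exact Finset.sum_congr rfl fun r _ => by rw [hpt r]
  have hXlim := hdom X hX hXk
  have hYlim := hdom Y hY hYk
  rw [funext heq] at hXlim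
  exact tendsto_nhds_unique hXlim hYlim

end CKaux

/-- For Borel measurable random variables in `C(K)`, `K` compact metric,
with finite `k`-th moments of the norm, equality of the expectations of all bounded
`k`-linear forms, of all weak `k`-th moments, and of all pointwise joint `k`-th moments,
are equivalent. -/
theorem CK_moment_equality_tfae
    {K : Type*} [MetricSpace K] [CompactSpace K]
    [MeasurableSpace (ContinuousMap K ℝ)] [BorelSpace (ContinuousMap K ℝ)]
    {Ω : Type*} [MeasurableSpace Ω] {μ : Measure Ω} [IsProbabilityMeasure μ]
    {k : ℕ} (hk : 1 ≤ k)
    {X Y : Ω → ContinuousMap K ℝ} (hX : Measurable X) (hY : Measurable Y)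
    (hXk : Integrable (fun ω => ‖X ω‖ ^ k) μ)
    (hYk : Integrable (fun ω => ‖Y ω‖ ^ k) μ) :
    ((∀ α : ContinuousMultilinearMap ℝ (fun _ : Fin k => ContinuousMap K ℝ) ℝ,
        ∫ ω, α (fun _ => X ω) ∂μ = ∫ ω, α (fun _ => Y ω) ∂μ) ↔
      (∀ x : Fin k → StrongDual ℝ (ContinuousMap K ℝ),
        ∫ ω, (∏ i, x i (X ω)) ∂μ = ∫ ω, (∏ i, x i (Y ω)) ∂μ)) ∧
    ((∀ x : Fin k → StrongDual ℝ (ContinuousMap K ℝ),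
        ∫ ω, (∏ i, x i (X ω)) ∂μ = ∫ ω, (∏ i, x i (Y ω)) ∂μ) ↔
      (∀ t : Fin k → K,
        ∫ ω, (∏ i, X ω (t i)) ∂μ = ∫ ω, (∏ i, Y ω (t i)) ∂μ)) := by
  have hca : (∀ t : Fin k → K,
        ∫ ω, (∏ i, X ω (t i)) ∂μ = ∫ ω, (∏ i, Y ω (t i)) ∂μ) →
      ∀ α : ContinuousMultilinearMap ℝ (fun _ : Fin k => ContinuousMap K ℝ) ℝ,
        ∫ ω, α (fun _ => X ω) ∂μ = ∫ ω, α (fun _ => Y ω) ∂μ :=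
    fun hc α => CK_key hX hY hXk hYk hc α
  have hab : (∀ α : ContinuousMultilinearMap ℝ (fun _ : Fin k => ContinuousMap K ℝ) ℝ,
        ∫ ω, α (fun _ => X ω) ∂μ = ∫ ω, α (fun _ => Y ω) ∂μ) →
      ∀ x : Fin k → StrongDual ℝ (ContinuousMap K ℝ),
        ∫ ω, (∏ i, x i (X ω)) ∂μ = ∫ ω, (∏ i, x i (Y ω)) ∂μ := by
    intro ha x
    have := ha ((ContinuousMultilinearMap.mkPiAlgebra ℝ (Fin k) ℝ).compContinuousLinearMap x)
    simpa [ContinuousMultilinearMap.compContinuousLinearMap_apply,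
      ContinuousMultilinearMap.mkPiAlgebra_apply] using this
  have hbc : (∀ x : Fin k → StrongDual ℝ (ContinuousMap K ℝ),
        ∫ ω, (∏ i, x i (X ω)) ∂μ = ∫ ω, (∏ i, x i (Y ω)) ∂μ) →
      ∀ t : Fin k → K,
        ∫ ω, (∏ i, X ω (t i)) ∂μ = ∫ ω, (∏ i, Y ω (t i)) ∂μ := by
    intro hb t
    have := hb (fun i => ContinuousMap.evalCLM ℝ (t i))
    simpa [ContinuousMap.evalCLM] using this
  exact ⟨⟨hab, fun hb => hca (hbc hb)⟩, ⟨hbc, fun hc => hab (hca hc)⟩⟩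
end

section
/- Let B be a real Banach space, let k ≥ 1 be an integer, and let X be a B-valued random variable on a probability space that is weakly measurable, i.e., ω ↦ x*(X(ω)) is measurable for every continuous linear functional x* ∈ B*. Then the following are equivalent: (i) for all x₁*,…,x_k* ∈ B*, the product x₁*(X)⋯x_k*(X) is integrable; (ii) E|x*(X)|^k < ∞ for every x* ∈ B*; (iii) sup{E|x*(X)|^k : x* ∈ B*, ‖x*‖ ≤ 1} < ∞. -/
open MeasureTheory
open scoped BigOperators ENNReal NNReal

open Filter
open scoped Topology

private lemma prod_le_sum_pow {k : ℕ} (hk : 1 ≤ k) (b : Fin k → ℝ≥0∞) :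
    ∏ i, b i ≤ ∑ i, (b i)^k := by
  have hne : (Finset.univ : Finset (Fin k)).Nonempty := ⟨⟨0, hk⟩, Finset.mem_univ _⟩
  obtain ⟨j, -, hj⟩ := Finset.exists_mem_eq_sup Finset.univ hne b
  calc ∏ i, b i ≤ ∏ _i : Fin k, Finset.univ.sup b :=
        Finset.prod_le_prod' fun i _ => Finset.le_sup (Finset.mem_univ i)
    _ = (Finset.univ.sup b)^k := by simp
    _ = (b j)^k := by rw [hj]
    _ ≤ ∑ i, (b i)^k :=
        Finset.single_le_sum (f := fun i => (b i)^k) (fun _ _ => zero_le) (Finset.mem_univ j)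

private lemma pow_add_le {k : ℕ} (a b : ℝ≥0∞) : (a+b)^k ≤ 2^k * (a^k + b^k) := by
  calc (a+b)^k ≤ (2 * max a b)^k := by
        apply pow_le_pow_left₀ (zero_le)
        rw [two_mul]
        exact add_le_add (le_max_left a b) (le_max_right a b)
    _ = 2^k * (max a b)^k := mul_pow _ _ _
    _ ≤ 2^k * (a^k + b^k) := by
        apply mul_le_mul_right
        rcases le_total a b with h | h
        · rw [max_eq_right h]; exact le_add_self
        · rw [max_eq_left h]; exact self_le_add_right _ _

/-- For a weakly measurable `B`-valued random variable `X`, the existence of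
all weak `k`-th moments, the finiteness of `E|x*(X)|^k` for every `x* ∈ B*`, and the
finiteness of the supremum of `E|x*(X)|^k` over the unit ball of `B*`, are all equivalent. -/
theorem weak_kth_moment_exists_iff
    {B : Type*} [NormedAddCommGroup B] [NormedSpace ℝ B] [CompleteSpace B]
    {Ω : Type*} [MeasurableSpace Ω] {μ : Measure Ω} [IsProbabilityMeasure μ]
    {k : ℕ} (hk : 1 ≤ k) {X : Ω → B}
    (hw : ∀ x : StrongDual ℝ B, Measurable fun ω => x (X ω)) :
    ((∀ x : Fin k → StrongDual ℝ B,
        Integrable (fun ω => ∏ i, x i (X ω)) μ) ↔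
      (∀ x : StrongDual ℝ B,
        ∫⁻ ω, (‖x (X ω)‖₊ : ℝ≥0∞) ^ k ∂μ < ⊤)) ∧
    ((∀ x : StrongDual ℝ B,
        ∫⁻ ω, (‖x (X ω)‖₊ : ℝ≥0∞) ^ k ∂μ < ⊤) ↔
      (∃ C : ℝ≥0∞, C ≠ ⊤ ∧ ∀ x : StrongDual ℝ B, ‖x‖ ≤ 1 →
        ∫⁻ ω, (‖x (X ω)‖₊ : ℝ≥0∞) ^ k ∂μ ≤ C)) := by
  have hmeas : ∀ x : StrongDual ℝ B,
      Measurable fun ω => (‖x (X ω)‖₊ : ℝ≥0∞) ^ k :=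
    fun x => ((hw x).nnnorm.coe_nnreal_ennreal).pow_const k
  constructor
  · -- (i) ↔ (ii)
    constructor
    · intro h x
      have h1 := (h (fun _ => x)).2
      rw [hasFiniteIntegral_def] at h1
      simpa [Finset.prod_const, nnnorm_pow, ENNReal.coe_pow, enorm_eq_nnnorm] using h1
    · intro h x
      refine ⟨(Finset.measurable_prod Finset.univ
          (fun i _ => hw (x i))).aestronglyMeasurable, ?_⟩
      rw [hasFiniteIntegral_def]
      have hbd : ∀ ω, (‖∏ i, x i (X ω)‖₊ : ℝ≥0∞) ≤
          ∑ i, (‖x i (X ω)‖₊ : ℝ≥0∞) ^ k := by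
        intro ω
        calc (‖∏ i, x i (X ω)‖₊ : ℝ≥0∞) = ∏ i, (‖x i (X ω)‖₊ : ℝ≥0∞) := by
              rw [nnnorm_prod, ENNReal.coe_finset_prod]
          _ ≤ ∑ i, (‖x i (X ω)‖₊ : ℝ≥0∞) ^ k := prod_le_sum_pow hk _
      calc ∫⁻ ω, (‖∏ i, x i (X ω)‖₊ : ℝ≥0∞) ∂μ
          ≤ ∫⁻ ω, ∑ i, (‖x i (X ω)‖₊ : ℝ≥0∞) ^ k ∂μ := lintegral_mono hbd
        _ = ∑ i, ∫⁻ ω, (‖x i (X ω)‖₊ : ℝ≥0∞) ^ k ∂μ :=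
            lintegral_finset_sum _ (fun i _ => hmeas (x i))
        _ < ⊤ := ENNReal.sum_lt_top.mpr (fun i _ => h (x i))
  · -- (ii) ↔ (iii)
    constructor
    · -- Baire category argument
      intro h
      set F : ℕ → Set (StrongDual ℝ B) :=
        fun n => {x | ∫⁻ ω, (‖x (X ω)‖₊ : ℝ≥0∞) ^ k ∂μ ≤ n} with hF
      have hclosed : ∀ n, IsClosed (F n) := by
        intro n
        apply IsSeqClosed.isClosed
        intro xs x hxs hlim
        have hpt : ∀ ω, Tendsto (fun m => (‖xs m (X ω)‖₊ : ℝ≥0∞) ^ k) atTop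
            (𝓝 ((‖x (X ω)‖₊ : ℝ≥0∞) ^ k)) := by
          intro ω
          have h1 : Tendsto (fun m => xs m (X ω)) atTop (𝓝 (x (X ω))) :=
            ((ContinuousLinearMap.apply ℝ ℝ (X ω)).continuous.tendsto x).comp hlim
          exact ENNReal.Tendsto.pow (ENNReal.tendsto_coe.mpr h1.nnnorm)
        calc ∫⁻ ω, (‖x (X ω)‖₊ : ℝ≥0∞) ^ k ∂μ
            = ∫⁻ ω, liminf (fun m => (‖xs m (X ω)‖₊ : ℝ≥0∞) ^ k) atTop ∂μ :=
              lintegral_congr fun ω => ((hpt ω).liminf_eq).symm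
          _ ≤ liminf (fun m => ∫⁻ ω, (‖xs m (X ω)‖₊ : ℝ≥0∞) ^ k ∂μ) atTop :=
              lintegral_liminf_le (fun m => hmeas (xs m))
          _ ≤ liminf (fun _ => (n : ℝ≥0∞)) atTop :=
              liminf_le_liminf (Eventually.of_forall hxs)
          _ = n := liminf_const _
      have hunion : (⋃ n, F n) = Set.univ := by
        ext x
        simp only [Set.mem_iUnion, Set.mem_univ, iff_true, hF, Set.mem_setOf_eq]
        obtain ⟨n, hn⟩ := ENNReal.exists_nat_gt (h x).ne
        exact ⟨n, hn.le⟩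
      haveI : BaireSpace (StrongDual ℝ B) :=
        BaireSpace.of_completelyPseudoMetrizable
      obtain ⟨n, hn⟩ := nonempty_interior_of_iUnion_of_closed hclosed hunion
      obtain ⟨x₀, hx₀⟩ := hn
      rw [mem_interior_iff_mem_nhds, Metric.mem_nhds_iff] at hx₀
      obtain ⟨r, hr, hball⟩ := hx₀
      -- any y with ‖y‖ < r has moment ≤ 2^k * (n + n)
      have hsmall : ∀ y : StrongDual ℝ B, ‖y‖ < r →
          ∫⁻ ω, (‖y (X ω)‖₊ : ℝ≥0∞) ^ k ∂μ ≤ 2 ^ k * ((n : ℝ≥0∞) + n) := by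
        intro y hy
        have h1 : x₀ + y ∈ F n := hball (by
          rw [Metric.mem_ball, dist_eq_norm]; simpa using hy)
        have h2 : x₀ ∈ F n := hball (Metric.mem_ball_self hr)
        have hbd : ∀ ω, (‖y (X ω)‖₊ : ℝ≥0∞) ^ k ≤
            2 ^ k * ((‖(x₀ + y) (X ω)‖₊ : ℝ≥0∞) ^ k + (‖x₀ (X ω)‖₊ : ℝ≥0∞) ^ k) := by
          intro ω
          have : (‖y (X ω)‖₊ : ℝ≥0∞) ≤
              (‖(x₀ + y) (X ω)‖₊ : ℝ≥0∞) + (‖x₀ (X ω)‖₊ : ℝ≥0∞) := by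
            have : y (X ω) = (x₀ + y) (X ω) - x₀ (X ω) := by
              simp [ContinuousLinearMap.add_apply]
            rw [this]
            exact_mod_cast nnnorm_sub_le _ _
          calc (‖y (X ω)‖₊ : ℝ≥0∞) ^ k
              ≤ ((‖(x₀ + y) (X ω)‖₊ : ℝ≥0∞) + (‖x₀ (X ω)‖₊ : ℝ≥0∞)) ^ k :=
                pow_le_pow_left₀ (zero_le) this k
            _ ≤ 2 ^ k * ((‖(x₀ + y) (X ω)‖₊ : ℝ≥0∞) ^ k + (‖x₀ (X ω)‖₊ : ℝ≥0∞) ^ k) :=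
                pow_add_le _ _
        calc ∫⁻ ω, (‖y (X ω)‖₊ : ℝ≥0∞) ^ k ∂μ
            ≤ ∫⁻ ω, 2 ^ k * ((‖(x₀ + y) (X ω)‖₊ : ℝ≥0∞) ^ k + (‖x₀ (X ω)‖₊ : ℝ≥0∞) ^ k) ∂μ :=
              lintegral_mono hbd
          _ = 2 ^ k * (∫⁻ ω, ((‖(x₀ + y) (X ω)‖₊ : ℝ≥0∞) ^ k + (‖x₀ (X ω)‖₊ : ℝ≥0∞) ^ k) ∂μ) :=
              lintegral_const_mul _ ((hmeas (x₀ + y)).add (hmeas x₀))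
          _ = 2 ^ k * ((∫⁻ ω, (‖(x₀ + y) (X ω)‖₊ : ℝ≥0∞) ^ k ∂μ) +
                ∫⁻ ω, (‖x₀ (X ω)‖₊ : ℝ≥0∞) ^ k ∂μ) := by
              rw [lintegral_add_left (hmeas (x₀ + y))]
          _ ≤ 2 ^ k * ((n : ℝ≥0∞) + n) := mul_le_mul_right (add_le_add h1 h2) _
      -- now scale to the unit ball
      set M : ℝ≥0∞ := 2 ^ k * ((n : ℝ≥0∞) + n) with hM
      have hMne : M ≠ ⊤ := by
        refine ENNReal.mul_ne_top ?_ ?_ <;> simp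
      set d : ℝ≥0∞ := (‖(r / 2 : ℝ)‖₊ : ℝ≥0∞) with hd
      have hd0 : d ≠ 0 := by
        simp [hd, nnnorm_eq_zero]
        positivity
      have hdt : d ≠ ⊤ := ENNReal.coe_ne_top
      refine ⟨M / d ^ k, ?_, ?_⟩
      · exact (ENNReal.div_lt_top hMne (pow_ne_zero k hd0)).ne
      · intro x hx
        have hnorm : ‖(r / 2 : ℝ) • x‖ < r := by
          rw [norm_smul]
          calc ‖(r / 2 : ℝ)‖ * ‖x‖ ≤ ‖(r / 2 : ℝ)‖ * 1 := by
                exact mul_le_mul_of_nonneg_left hx (norm_nonneg _)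
            _ = |r / 2| := by rw [mul_one]; rfl
            _ < r := by rw [abs_of_pos (by positivity)]; linarith
        have hint := hsmall ((r / 2 : ℝ) • x) hnorm
        have heq : ∫⁻ ω, (‖((r / 2 : ℝ) • x) (X ω)‖₊ : ℝ≥0∞) ^ k ∂μ =
            d ^ k * ∫⁻ ω, (‖x (X ω)‖₊ : ℝ≥0∞) ^ k ∂μ := by
          rw [← lintegral_const_mul _ (hmeas x)]
          apply lintegral_congr
          intro ω
          rw [ContinuousLinearMap.smul_apply, smul_eq_mul, nnnorm_mul,
            ENNReal.coe_mul, mul_pow, hd]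
        rw [heq] at hint
        rw [ENNReal.le_div_iff_mul_le (Or.inl (pow_ne_zero k hd0))
          (Or.inl (ENNReal.pow_ne_top hdt))]
        rw [mul_comm]
        exact hint
    · -- scaling direction (iii) → (ii)
      rintro ⟨C, hC, hball⟩ x
      by_cases hx : x = 0
      · subst hx
        simp only [ContinuousLinearMap.zero_apply, nnnorm_zero, ENNReal.coe_zero]
        rw [zero_pow (by omega)]
        simp
      · set c : ℝ := ‖x‖ with hc
        have hc0 : c ≠ 0 := norm_ne_zero_iff.mpr hx
        set y : StrongDual ℝ B := c⁻¹ • x with hy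
        have hyn : ‖y‖ ≤ 1 := by
          have hcn : ‖(c⁻¹ : ℝ)‖ = c⁻¹ := by
            rw [Real.norm_eq_abs, abs_of_nonneg (inv_nonneg.mpr (norm_nonneg x))]
          rw [hy, norm_smul, hcn, ← hc, inv_mul_cancel₀ hc0]
        have hxy : x = c • y := by
          rw [hy, smul_smul, mul_inv_cancel₀ hc0, one_smul]
        have heq : ∫⁻ ω, (‖x (X ω)‖₊ : ℝ≥0∞) ^ k ∂μ =
            (‖c‖₊ : ℝ≥0∞) ^ k * ∫⁻ ω, (‖y (X ω)‖₊ : ℝ≥0∞) ^ k ∂μ := by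
          rw [← lintegral_const_mul _ (hmeas y)]
          apply lintegral_congr
          intro ω
          conv_lhs => rw [hxy]
          rw [ContinuousLinearMap.smul_apply, smul_eq_mul, nnnorm_mul,
            ENNReal.coe_mul, mul_pow]
        rw [heq]
        exact ENNReal.mul_lt_top (by simp [ENNReal.pow_lt_top]) (lt_of_le_of_lt (hball y hyn) hC.lt_top)
end

section
/- Let K be a compact metric space, let k ≥ 1 be an integer, and let X be a Borel measurable random variable with values in C(K), the Banach space of continuous real-valued functions on K with the supremum norm. Then E|x*(X)|^k < ∞ for every continuous linear functional x* on C(K) if and only if sup{E|X(t)|^k : t ∈ K} < ∞, where X(t) denotes the real random variable ω ↦ X(ω)(t). -/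
open MeasureTheory Filter
open scoped BigOperators ENNReal NNReal Topology

section CKMomentAux

lemma exists_finite_approx {K : Type*} [MetricSpace K] [CompactSpace K]
    (x : StrongDual ℝ (ContinuousMap K ℝ)) {ε : ℝ} (hε : 0 < ε) :
    ∃ (s : Finset K) (a : K → ℝ),
      (∑ t ∈ s, |a t|) ≤ ‖x‖ ∧
      ∀ (f : ContinuousMap K ℝ) (δ : ℝ), 0 ≤ δ →
        (∀ p q : K, dist p q < ε → |f p - f q| ≤ δ) →
        |(∑ t ∈ s, a t * f t) - x f| ≤ ‖x‖ * δ := by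
  obtain ⟨T, -, hTfin, hTcov⟩ :=
    finite_cover_balls_of_compact (isCompact_univ : IsCompact (Set.univ : Set K)) hε
  classical
  set s : Finset K := hTfin.toFinset with hs
  -- bump functions
  set ψ : K → K → ℝ := fun t p => max (ε - dist p t) 0 with hψ
  have hψcont : ∀ t, Continuous (ψ t) := fun t =>
    ((continuous_const.sub (continuous_id.dist continuous_const)).max continuous_const)
  have hψnonneg : ∀ t p, 0 ≤ ψ t p := fun t p => le_max_right _ _
  set S : K → ℝ := fun p => ∑ t ∈ s, ψ t p with hS
  have hScont : Continuous S := continuous_finset_sum _ fun t _ => hψcont t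
  have hSpos : ∀ p, 0 < S p := by
    intro p
    have hp : p ∈ ⋃ y ∈ T, Metric.ball y ε := hTcov (Set.mem_univ p)
    simp only [Set.mem_iUnion, Metric.mem_ball] at hp
    obtain ⟨y, hyT, hyp⟩ := hp
    refine Finset.sum_pos' (fun t _ => hψnonneg t p) ⟨y, hTfin.mem_toFinset.mpr hyT, ?_⟩
    simp only [hψ, lt_max_iff]
    left; linarith
  set φ : K → ContinuousMap K ℝ := fun t =>
    ⟨fun p => ψ t p / S p, (hψcont t).div hScont fun p => (hSpos p).ne'⟩ with hφ
  have hφnonneg : ∀ t p, 0 ≤ φ t p := fun t p =>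
    div_nonneg (hψnonneg t p) (hSpos p).le
  have hφsum : ∀ p, ∑ t ∈ s, φ t p = 1 := by
    intro p
    simp only [hφ, ContinuousMap.coe_mk]
    rw [← Finset.sum_div, div_self (hSpos p).ne']
  have hφzero : ∀ t p, ε ≤ dist p t → φ t p = 0 := by
    intro t p h
    simp only [hφ, ContinuousMap.coe_mk, hψ]
    rw [max_eq_right (by linarith), zero_div]
  refine ⟨s, fun t => x (φ t), ?_, ?_⟩
  · -- sum of absolute values of coefficients bounded by ‖x‖
    set c : K → ℝ := fun t => if x (φ t) < 0 then (-1 : ℝ) else 1 with hc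
    set u : ContinuousMap K ℝ := ∑ t ∈ s, c t • φ t with hu
    have habs : ∀ t, c t * x (φ t) = |x (φ t)| := by
      intro t
      by_cases h : x (φ t) < 0
      · simp [hc, h, abs_of_neg h]
      · simp [hc, h, abs_of_nonneg (not_lt.mp h)]
    have hxu : x u = ∑ t ∈ s, |x (φ t)| := by
      rw [hu, map_sum]
      exact Finset.sum_congr rfl fun t _ => by rw [x.map_smul, smul_eq_mul, habs t]
    have hunorm : ‖u‖ ≤ 1 := by
      refine (ContinuousMap.norm_le _ zero_le_one).mpr fun p => ?_
      have : u p = ∑ t ∈ s, c t * φ t p := by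
        simp [hu, ContinuousMap.sum_apply]
      rw [Real.norm_eq_abs, this]
      calc |∑ t ∈ s, c t * φ t p| ≤ ∑ t ∈ s, |c t * φ t p| := Finset.abs_sum_le_sum_abs _ _
        _ = ∑ t ∈ s, φ t p := by
            refine Finset.sum_congr rfl fun t _ => ?_
            rw [abs_mul, abs_of_nonneg (hφnonneg t p)]
            have : |c t| = 1 := by by_cases h : x (φ t) < 0 <;> simp [hc, h]
            rw [this, one_mul]
        _ = 1 := hφsum p
    calc ∑ t ∈ s, |x (φ t)| = x u := hxu.symm
      _ ≤ |x u| := le_abs_self _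
      _ ≤ ‖x‖ * ‖u‖ := x.le_opNorm u
      _ ≤ ‖x‖ * 1 := by gcongr
      _ = ‖x‖ := mul_one _
  · -- approximation property
    intro f δ hδ hf
    set Pf : ContinuousMap K ℝ := ∑ t ∈ s, f t • φ t with hPf
    have h1 : ∑ t ∈ s, x (φ t) * f t = x Pf := by
      rw [hPf, map_sum]
      exact Finset.sum_congr rfl fun t _ => by rw [x.map_smul, smul_eq_mul, mul_comm]
    have h2 : ‖Pf - f‖ ≤ δ := by
      refine (ContinuousMap.norm_le _ hδ).mpr fun p => ?_
      have hPfp : Pf p = ∑ t ∈ s, f t * φ t p := by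
        simp [hPf, ContinuousMap.sum_apply]
      have heq : (Pf - f) p = ∑ t ∈ s, (f t - f p) * φ t p := by
        simp only [ContinuousMap.sub_apply, hPfp]
        simp only [sub_mul]
        rw [Finset.sum_sub_distrib, ← Finset.mul_sum, hφsum, mul_one]
      rw [Real.norm_eq_abs, heq]
      calc |∑ t ∈ s, (f t - f p) * φ t p| ≤ ∑ t ∈ s, |(f t - f p) * φ t p| :=
            Finset.abs_sum_le_sum_abs _ _
        _ ≤ ∑ t ∈ s, δ * φ t p := by
            refine Finset.sum_le_sum fun t _ => ?_
            rw [abs_mul, abs_of_nonneg (hφnonneg t p)]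
            by_cases h : dist p t < ε
            · have := hf t p (by rwa [dist_comm])
              exact mul_le_mul_of_nonneg_right this (hφnonneg t p)
            · rw [hφzero t p (not_lt.mp h)]
              simp
        _ = δ := by rw [← Finset.mul_sum, hφsum, mul_one]
    calc |(∑ t ∈ s, x (φ t) * f t) - x f| = |x (Pf - f)| := by rw [h1, map_sub]
      _ ≤ ‖x‖ * ‖Pf - f‖ := x.le_opNorm _
      _ ≤ ‖x‖ * δ := by gcongr

section C
variable {Ω : Type*} [MeasurableSpace Ω] {μ : Measure Ω}


lemma lint_npow_eq_eLpNorm_pow' {k : ℕ} (hk : 1 ≤ k) (f : Ω → ℝ) :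
    ∫⁻ ω, (‖f ω‖₊ : ℝ≥0∞) ^ k ∂μ = (eLpNorm f k μ) ^ k := by
  have hk0 : (k : ℝ≥0∞) ≠ 0 := by exact_mod_cast (Nat.pos_of_ne_zero (by omega)).ne'
  have hkR : (k : ℝ) ≠ 0 := by exact_mod_cast (by omega : k ≠ 0)
  rw [eLpNorm_eq_lintegral_rpow_enorm_toReal hk0 (by simp), ENNReal.toReal_natCast,
    ← ENNReal.rpow_natCast _ k, ← ENNReal.rpow_mul, one_div, inv_mul_cancel₀ hkR,
    ENNReal.rpow_one]
  congr 1; funext ω; rw [← ENNReal.rpow_natCast, enorm_eq_nnnorm]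

lemma lint_combo_bound {K : Type*} [MetricSpace K] [CompactSpace K]
    [MeasurableSpace (ContinuousMap K ℝ)] [BorelSpace (ContinuousMap K ℝ)]
    {k : ℕ} (hk : 1 ≤ k) {X : Ω → ContinuousMap K ℝ} (hX : Measurable X)
    {C : ℝ≥0∞} (hC : ∀ t : K, ∫⁻ ω, (‖X ω t‖₊ : ℝ≥0∞) ^ k ∂μ ≤ C)
    (s : Finset K) (a : K → ℝ) {M : ℝ} (hM : ∑ t ∈ s, |a t| ≤ M) :
    ∫⁻ ω, (‖∑ t ∈ s, a t * X ω t‖₊ : ℝ≥0∞) ^ k ∂μ ≤ ENNReal.ofReal M ^ k * C := by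
  have hp1 : (1 : ℝ≥0∞) ≤ (k : ℝ≥0∞) := by exact_mod_cast hk
  have hkR : (k : ℝ) ≠ 0 := by exact_mod_cast (by omega : k ≠ 0)
  have hmeas : ∀ t : K, Measurable fun ω => X ω t := fun t =>
    (continuous_eval_const t).measurable.comp hX
  rw [lint_npow_eq_eLpNorm_pow' hk]
  have h1 : eLpNorm (fun ω => ∑ t ∈ s, a t * X ω t) k μ
      ≤ ∑ t ∈ s, ENNReal.ofReal (|a t|) * C ^ (1 / (k : ℝ)) := by
    have h2 : eLpNorm (fun ω => ∑ t ∈ s, a t * X ω t) k μ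
        ≤ ∑ t ∈ s, eLpNorm (fun ω => a t * X ω t) k μ := by
      have := eLpNorm_sum_le (μ := μ) (s := s)
        (f := fun t ω => a t * X ω t)
        (fun t _ => ((measurable_const.mul (hmeas t))).aestronglyMeasurable) hp1
      convert this using 2
      funext ω
      simp
    refine h2.trans (Finset.sum_le_sum fun t _ => ?_)
    have h3 : eLpNorm (fun ω => a t * X ω t) k μ = ‖a t‖₊ * eLpNorm (fun ω => X ω t) k μ := by
      have := eLpNorm_const_smul (μ := μ) (a t) (fun ω => X ω t) (k : ℝ≥0∞)
      rw [enorm_eq_nnnorm] at this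
      exact this
    rw [h3]
    have h4 : eLpNorm (fun ω => X ω t) k μ ≤ C ^ (1 / (k : ℝ)) := by
      have h5 := lint_npow_eq_eLpNorm_pow' (μ := μ) hk (fun ω => X ω t)
      have h6 : (eLpNorm (fun ω => X ω t) k μ) ^ k ≤ C := h5 ▸ hC t
      calc eLpNorm (fun ω => X ω t) k μ
          = ((eLpNorm (fun ω => X ω t) k μ) ^ k) ^ (1 / (k : ℝ)) := by
            rw [← ENNReal.rpow_natCast _ k, ← ENNReal.rpow_mul, mul_one_div,
              div_self hkR, ENNReal.rpow_one]
        _ ≤ C ^ (1 / (k : ℝ)) := ENNReal.rpow_le_rpow h6 (by positivity)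
    gcongr
    · rw [ENNReal.ofReal, Real.toNNReal_abs]
      rw [ENNReal.coe_le_coe, ← NNReal.coe_le_coe, coe_nnnorm, Real.coe_nnabs, Real.norm_eq_abs]
  calc (eLpNorm (fun ω => ∑ t ∈ s, a t * X ω t) k μ) ^ k
      ≤ (∑ t ∈ s, ENNReal.ofReal (|a t|) * C ^ (1 / (k : ℝ))) ^ k := by gcongr
    _ = ((∑ t ∈ s, ENNReal.ofReal (|a t|)) * C ^ (1 / (k : ℝ))) ^ k := by
        rw [← Finset.sum_mul]
    _ ≤ (ENNReal.ofReal M * C ^ (1 / (k : ℝ))) ^ k := by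
        gcongr
        rw [← ENNReal.ofReal_sum_of_nonneg (fun t _ => abs_nonneg _)]
        exact ENNReal.ofReal_le_ofReal hM
    _ = ENNReal.ofReal M ^ k * (C ^ (1 / (k : ℝ))) ^ k := mul_pow _ _ _
    _ = ENNReal.ofReal M ^ k * C := by
        rw [← ENNReal.rpow_natCast (C ^ (1 / (k : ℝ))) k, ← ENNReal.rpow_mul,
          one_div, inv_mul_cancel₀ hkR, ENNReal.rpow_one]
end C

lemma reverse_dir {K : Type*} [MetricSpace K] [CompactSpace K]
    [MeasurableSpace (ContinuousMap K ℝ)] [BorelSpace (ContinuousMap K ℝ)]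
    {Ω : Type*} [MeasurableSpace Ω] {μ : Measure Ω}
    {k : ℕ} (hk : 1 ≤ k) {X : Ω → ContinuousMap K ℝ} (hX : Measurable X)
    {C : ℝ≥0∞} (hCtop : C ≠ ⊤) (hC : ∀ t : K, ∫⁻ ω, (‖X ω t‖₊ : ℝ≥0∞) ^ k ∂μ ≤ C)
    (x : StrongDual ℝ (ContinuousMap K ℝ)) :
    ∫⁻ ω, (‖x (X ω)‖₊ : ℝ≥0∞) ^ k ∂μ < ⊤ := by
  have hchoice : ∀ n : ℕ, ∃ (s : Finset K) (a : K → ℝ), (∑ t ∈ s, |a t|) ≤ ‖x‖ ∧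
      ∀ (f : ContinuousMap K ℝ) (δ : ℝ), 0 ≤ δ →
        (∀ p q : K, dist p q < 1 / (n + 1 : ℝ) → |f p - f q| ≤ δ) →
        |(∑ t ∈ s, a t * f t) - x f| ≤ ‖x‖ * δ :=
    fun n => exists_finite_approx x (by positivity)
  choose s a ha happrox using hchoice
  set g : ℕ → Ω → ℝ := fun n ω => ∑ t ∈ s n, a n t * X ω t with hg
  have hbound : ∀ n, ∫⁻ ω, (‖g n ω‖₊ : ℝ≥0∞) ^ k ∂μ ≤ ENNReal.ofReal ‖x‖ ^ k * C :=
    fun n => lint_combo_bound hk hX hC (s n) (a n) (ha n)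
  have hmeasg : ∀ n, Measurable (g n) := by
    intro n
    exact Finset.measurable_sum _ fun t _ =>
      measurable_const.mul ((continuous_eval_const t).measurable.comp hX)
  have hlim : ∀ ω, Tendsto (fun n => g n ω) atTop (𝓝 (x (X ω))) := by
    intro ω
    rw [Metric.tendsto_atTop]
    intro η hη
    set δ' : ℝ := η / (2 * (‖x‖ + 1)) with hδ'
    have hδ'pos : 0 < δ' := by positivity
    obtain ⟨ε₀, hε₀, hmod⟩ := Metric.uniformContinuous_iff.mp
      (CompactSpace.uniformContinuous_of_continuous (X ω).continuous) δ' hδ'pos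
    obtain ⟨N, hN⟩ := exists_nat_gt (1 / ε₀)
    refine ⟨N, fun n hn => ?_⟩
    have hεn : (1 : ℝ) / (n + 1) ≤ ε₀ := by
      rw [div_le_iff₀ (by positivity)]
      rw [div_lt_iff₀ hε₀] at hN
      have : (N : ℝ) ≤ n := by exact_mod_cast hn
      nlinarith
    have h1 := happrox n (X ω) δ' hδ'pos.le fun p q hpq => by
      have := hmod (lt_of_lt_of_le hpq hεn)
      rw [Real.dist_eq] at this
      exact this.le
    rw [Real.dist_eq]
    refine lt_of_le_of_lt h1 ?_
    have hfrac : ‖x‖ / (2 * (‖x‖ + 1)) < 1 := by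
      rw [div_lt_one (by positivity)]
      linarith [norm_nonneg x]
    calc ‖x‖ * δ' = (‖x‖ / (2 * (‖x‖ + 1))) * η := by rw [hδ']; ring
      _ < 1 * η := by exact mul_lt_mul_of_pos_right hfrac hη
      _ = η := one_mul η
  calc ∫⁻ ω, (‖x (X ω)‖₊ : ℝ≥0∞) ^ k ∂μ
      = ∫⁻ ω, liminf (fun n => (‖g n ω‖₊ : ℝ≥0∞) ^ k) atTop ∂μ := by
        refine lintegral_congr fun ω => ?_
        refine (Filter.Tendsto.liminf_eq ?_).symm
        exact ((ENNReal.continuous_pow k).tendsto _).comp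
          ((ENNReal.continuous_coe.comp continuous_nnnorm).tendsto _ |>.comp (hlim ω))
    _ ≤ liminf (fun n => ∫⁻ ω, (‖g n ω‖₊ : ℝ≥0∞) ^ k ∂μ) atTop :=
        lintegral_liminf_le fun n =>
          ((hmeasg n).nnnorm.coe_nnreal_ennreal).pow_const k
    _ ≤ ENNReal.ofReal ‖x‖ ^ k * C :=
        liminf_le_of_frequently_le (Frequently.of_forall hbound)
    _ < ⊤ := ENNReal.mul_lt_top (ENNReal.pow_lt_top ENNReal.ofReal_lt_top) hCtop.lt_top

set_option maxHeartbeats 2000000 in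
lemma forward_dir {K : Type*} [MetricSpace K] [CompactSpace K]
    [MeasurableSpace (ContinuousMap K ℝ)] [BorelSpace (ContinuousMap K ℝ)]
    {Ω : Type*} [MeasurableSpace Ω] {μ : Measure Ω} [IsProbabilityMeasure μ]
    {k : ℕ} (hk : 1 ≤ k) {X : Ω → ContinuousMap K ℝ} (hX : Measurable X)
    (h : ∀ x : StrongDual ℝ (ContinuousMap K ℝ),
      ∫⁻ ω, (‖x (X ω)‖₊ : ℝ≥0∞) ^ k ∂μ < ⊤) :
    ∃ C : ℝ≥0∞, C ≠ ⊤ ∧ ∀ t : K, ∫⁻ ω, (‖X ω t‖₊ : ℝ≥0∞) ^ k ∂μ ≤ C := by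
  haveI : Fact ((1 : ℝ≥0∞) ≤ (k : ℝ≥0∞)) := ⟨by exact_mod_cast hk⟩
  have hknz : k ≠ 0 := by omega
  -- each x*(X) is in L^k
  have hmem : ∀ x : StrongDual ℝ (ContinuousMap K ℝ),
      MemLp (fun ω => x (X ω)) k μ := by
    intro x
    refine ⟨(x.continuous.measurable.comp hX).aestronglyMeasurable, ?_⟩
    have h2 := lint_npow_eq_eLpNorm_pow' (μ := μ) hk (fun ω => x (X ω))
    by_contra hcon
    rw [not_lt, top_le_iff] at hcon
    have := h x
    rw [h2, hcon, ENNReal.top_pow (by omega : k ≠ 0)] at this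
    exact absurd this (lt_irrefl _)
  -- the linear map into L^k
  set T : StrongDual ℝ (ContinuousMap K ℝ) →ₗ[ℝ] Lp ℝ (k : ℝ≥0∞) μ :=
    { toFun := fun x => (hmem x).toLp _
      map_add' := fun x y => by
        apply Lp.ext
        filter_upwards [MemLp.coeFn_toLp (hmem (x + y)),
          Lp.coeFn_add ((hmem x).toLp _) ((hmem y).toLp _),
          MemLp.coeFn_toLp (hmem x), MemLp.coeFn_toLp (hmem y)] with ω h1 h2 h3 h4
        rw [h1, h2, Pi.add_apply, h3, h4]
        rfl
      map_smul' := fun c x => by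
        simp only [RingHom.id_apply]
        apply Lp.ext
        filter_upwards [MemLp.coeFn_toLp (hmem (c • x)),
          Lp.coeFn_smul c ((hmem x).toLp _), MemLp.coeFn_toLp (hmem x)] with ω h1 h2 h3
        rw [h1, h2, Pi.smul_apply, h3]
        rfl } with hT
  haveI : CompleteSpace (Lp ℝ (k : ℝ≥0∞) μ) := inferInstance
  haveI : CompleteSpace (StrongDual ℝ (ContinuousMap K ℝ)) := inferInstance
  have hseq : ∀ (u : ℕ → StrongDual ℝ (ContinuousMap K ℝ)) y₀ z₀,
      Tendsto u atTop (𝓝 y₀) → Tendsto (⇑T ∘ u) atTop (𝓝 z₀) → z₀ = T y₀ := by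
    intro u y₀ z₀ huy huz
    have hinm : TendstoInMeasure μ (fun n => ((T ∘ u) n : Ω → ℝ)) atTop z₀ :=
      tendstoInMeasure_of_tendsto_Lp huz
    obtain ⟨ns, hns_mono, hae⟩ := hinm.exists_seq_tendsto_ae
    have hae2 : ∀ᵐ ω ∂μ, ∀ n, ((T (u n) : Lp ℝ (k : ℝ≥0∞) μ) : Ω → ℝ) ω = u n (X ω) :=
      ae_all_iff.mpr fun n => MemLp.coeFn_toLp (hmem (u n))
    have key : ∀ᵐ ω ∂μ, z₀ ω = y₀ (X ω) := by
      filter_upwards [hae, hae2] with ω h1 h2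
      have ht1 : Tendsto (fun i => u (ns i) (X ω)) atTop (𝓝 ((z₀ : Ω → ℝ) ω)) := by
        refine h1.congr fun i => ?_
        exact h2 (ns i)
      have ht2 : Tendsto (fun i => u (ns i) (X ω)) atTop (𝓝 (y₀ (X ω))) := by
        have happ : Tendsto (fun n => u n (X ω)) atTop (𝓝 (y₀ (X ω))) :=
          ((ContinuousLinearMap.apply ℝ ℝ (X ω)).continuous.tendsto y₀).comp huy
        exact happ.comp hns_mono.tendsto_atTop
      exact tendsto_nhds_unique ht1 ht2
    apply Lp.ext
    filter_upwards [key, MemLp.coeFn_toLp (hmem y₀)] with ω h1 h2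
    rw [h1]
    exact h2.symm
  have hcont : Continuous T := LinearMap.continuous_of_seq_closed_graph (𝕜 := ℝ)
    (E := StrongDual ℝ (ContinuousMap K ℝ)) (F := Lp ℝ (k : ℝ≥0∞) μ) (g := T) hseq
  letI : NormedAddCommGroup (StrongDual ℝ (ContinuousMap K ℝ)) := inferInstance
  letI : NormedSpace ℝ (StrongDual ℝ (ContinuousMap K ℝ)) := inferInstance
  set G : StrongDual ℝ (ContinuousMap K ℝ) →L[ℝ] Lp ℝ (k : ℝ≥0∞) μ :=
    ⟨T, hcont⟩ with hG
  refine ⟨ENNReal.ofReal ‖G‖ ^ k, ENNReal.pow_ne_top ENNReal.ofReal_ne_top, fun t => ?_⟩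
  set δt : StrongDual ℝ (ContinuousMap K ℝ) := ContinuousMap.evalCLM ℝ t with hδt
  have hδnorm : ‖δt‖ ≤ 1 := by
    refine ContinuousLinearMap.opNorm_le_bound _ zero_le_one fun f => ?_
    simpa [hδt] using f.norm_coe_le_norm t
  have step1 : ∫⁻ ω, (‖X ω t‖₊ : ℝ≥0∞) ^ k ∂μ = (eLpNorm (fun ω => δt (X ω)) k μ) ^ k :=
    lint_npow_eq_eLpNorm_pow' hk _
  have step2 : eLpNorm (fun ω => δt (X ω)) k μ = eLpNorm ((T δt : Lp ℝ (k : ℝ≥0∞) μ) : Ω → ℝ) k μ :=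
    (eLpNorm_congr_ae (MemLp.coeFn_toLp (hmem δt))).symm
  have step3 : eLpNorm ((T δt : Lp ℝ (k : ℝ≥0∞) μ) : Ω → ℝ) k μ
      = ENNReal.ofReal ‖(T δt : Lp ℝ (k : ℝ≥0∞) μ)‖ := by
    rw [Lp.norm_def, ENNReal.ofReal_toReal (Lp.eLpNorm_ne_top _)]
  have step4 : ‖(T δt : Lp ℝ (k : ℝ≥0∞) μ)‖ ≤ ‖G‖ := by
    have := G.le_opNorm δt
    calc ‖(T δt : Lp ℝ (k : ℝ≥0∞) μ)‖ = ‖G δt‖ := rfl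
      _ ≤ ‖G‖ * ‖δt‖ := G.le_opNorm δt
      _ ≤ ‖G‖ * 1 := by gcongr
      _ = ‖G‖ := mul_one _
  rw [step1, step2, step3]
  exact pow_le_pow_left' (ENNReal.ofReal_le_ofReal step4) k

end CKMomentAux

/-- For a Borel measurable `C(K)`-valued random variable `X`, `K` compact
metric, `E|x*(X)|^k < ∞` for every continuous linear functional `x*` if and only if
`sup_t E|X(t)|^k < ∞`. -/
theorem CK_weak_kth_moment_iff_sup_pointwise
    {K : Type*} [MetricSpace K] [CompactSpace K]
    [MeasurableSpace (ContinuousMap K ℝ)] [BorelSpace (ContinuousMap K ℝ)]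
    {Ω : Type*} [MeasurableSpace Ω] {μ : Measure Ω} [IsProbabilityMeasure μ]
    {k : ℕ} (hk : 1 ≤ k)
    {X : Ω → ContinuousMap K ℝ} (hX : Measurable X) :
    (∀ x : StrongDual ℝ (ContinuousMap K ℝ),
        ∫⁻ ω, (‖x (X ω)‖₊ : ℝ≥0∞) ^ k ∂μ < ⊤) ↔
    (∃ C : ℝ≥0∞, C ≠ ⊤ ∧ ∀ t : K, ∫⁻ ω, (‖X ω t‖₊ : ℝ≥0∞) ^ k ∂μ ≤ C) := by
  constructor
  · intro h
    exact forward_dir hk hX h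
  · rintro ⟨C, hCtop, hC⟩ x
    exact reverse_dir hk hX hCtop hC x
end

section
/- Let B be a separable real Banach space and let s > 0 be a real number; write m = ⌈s⌉ − 1 and γ = s − m, so 0 < γ ≤ 1. Let X and Y be Borel measurable B-valued random variables on a probability space with E‖X‖^s < ∞ and E‖Y‖^s < ∞. Let F_s be the set of functions f : B → ℝ that are m times continuously Fréchet differentiable and satisfy ‖f^{(m)}(x) − f^{(m)}(y)‖ ≤ ‖x − y‖^γ for all x, y ∈ B (so each f(X), f(Y) is integrable). Then the set of real numbers {|E f(X) − E f(Y)| : f ∈ F_s} is bounded above if and only if for every integer k with 1 ≤ k ≤ m and every bounded k-linear form α on B one has E α(X,…,X) = E α(Y,…,Y). -/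
open MeasureTheory
open scoped BigOperators

section ZolotarevAux

variable {B : Type*} [NormedAddCommGroup B] [NormedSpace ℝ B]

/-- The `n`-th iterated derivative of the diagonal restriction of a `k`-linear map vanishes
for `n > k`. -/
lemma iteratedFDeriv_diag_multilinear_eq_zero {k : ℕ} {n : ℕ}
    (α : ContinuousMultilinearMap ℝ (fun _ : Fin k => B) ℝ) (hn : k < n) (z : B) :
    iteratedFDeriv ℝ n (fun w : B => α (fun _ => w)) z = 0 := by
  classical
  set D : B →L[ℝ] (Fin k → B) :=
    ContinuousLinearMap.pi (fun _ : Fin k => ContinuousLinearMap.id ℝ B) with hD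
  have hcomp : (fun w : B => α (fun _ => w)) = (⇑α) ∘ ⇑D := rfl
  have hα : ContDiff ℝ (⊤ : ℕ∞) (⇑α) := α.contDiff
  have h1 : iteratedFDeriv ℝ n ((⇑α) ∘ ⇑D) z
      = (iteratedFDeriv ℝ n (⇑α) (D z)).compContinuousLinearMap fun _ => D :=
    D.iteratedFDeriv_comp_right hα z (by exact_mod_cast le_top)
  have h2 : iteratedFDeriv ℝ n (⇑α) (D z) = 0 := by
    have hb := α.norm_iteratedFDeriv_le n (D z)
    rw [show (Fintype.card (Fin k)).descFactorial n = 0 by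
        rw [Nat.descFactorial_eq_zero_iff_lt]; simpa using hn] at hb
    simp only [Nat.cast_zero, zero_mul] at hb
    exact norm_le_zero_iff.mp hb
  rw [hcomp, h1, h2]
  ext v
  simp

/-- The `m`-th iterated derivative of the diagonal restriction of a `k`-linear map is
constant for `k ≤ m`. -/
lemma iteratedFDeriv_diag_multilinear_const {k m : ℕ} (hk : k ≤ m)
    (α : ContinuousMultilinearMap ℝ (fun _ : Fin k => B) ℝ) (x y : B) :
    iteratedFDeriv ℝ m (fun w : B => α (fun _ => w)) x
      = iteratedFDeriv ℝ m (fun w : B => α (fun _ => w)) y := by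
  have hg : ContDiff ℝ ((m + 1 : ℕ) : ℕ∞) (fun w : B => α (fun _ => w)) :=
    α.contDiff.comp (contDiff_pi.mpr fun _ => contDiff_id)
  have hfd : ∀ z : B, fderiv ℝ (iteratedFDeriv ℝ m (fun w : B => α (fun _ => w))) z = 0 := by
    intro z
    ext u v
    have h := iteratedFDeriv_succ_apply_left (𝕜 := ℝ)
      (f := fun w : B => α (fun _ => w)) (x := z) (n := m) (Fin.cons u v)
    rw [iteratedFDeriv_diag_multilinear_eq_zero α (Nat.lt_succ_of_le hk) z] at h
    simpa using h.symm
  exact is_const_of_fderiv_eq_zero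
    (hg.differentiable_iteratedFDeriv (by exact_mod_cast Nat.lt_succ_self m)) hfd x y

lemma hasDerivAt_iteratedFDeriv_ray {f : B → ℝ} {m : ℕ} (hf : ContDiff ℝ (m : ℕ∞) f)
    {k : ℕ} (hk : k < m) (x : B) (t : ℝ) :
    HasDerivAt (fun t : ℝ => iteratedFDeriv ℝ k f (t • x) (fun _ => x))
      (iteratedFDeriv ℝ (k + 1) f (t • x) (fun _ => x)) t := by
  have hdiff : Differentiable ℝ (iteratedFDeriv ℝ k f) :=
    hf.differentiable_iteratedFDeriv (by exact_mod_cast hk)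
  have hc : HasDerivAt (fun t : ℝ => t • x) x t := by
    simpa using (hasDerivAt_id t).smul_const x
  have hF : HasFDerivAt (iteratedFDeriv ℝ k f)
      (fderiv ℝ (iteratedFDeriv ℝ k f) (t • x)) (t • x) := (hdiff (t • x)).hasFDerivAt
  have happ : HasFDerivAt
      (fun p : B => iteratedFDeriv ℝ k f p (fun _ => x))
      ((ContinuousMultilinearMap.apply ℝ (fun _ : Fin k => B) ℝ (fun _ => x)).comp
        (fderiv ℝ (iteratedFDeriv ℝ k f) (t • x))) (t • x) :=
    (ContinuousMultilinearMap.apply ℝ (fun _ : Fin k => B) ℝ (fun _ => x)).hasFDerivAt.comp _ hF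
  have h2 := happ.comp_hasDerivAt t hc
  have h3 : (((ContinuousMultilinearMap.apply ℝ (fun _ : Fin k => B) ℝ (fun _ => x)).comp
        (fderiv ℝ (iteratedFDeriv ℝ k f) (t • x))) : B → ℝ) x
      = iteratedFDeriv ℝ (k + 1) f (t • x) (fun _ => x) := by
    rw [iteratedFDeriv_succ_apply_left]
    simp only [ContinuousLinearMap.coe_comp', Function.comp_apply,
      ContinuousMultilinearMap.apply_apply]
    congr 1
  rw [← h3]
  exact h2

/-- Quantitative Taylor estimate for the positive-order case. -/
theorem taylor_estimate_pos {s : ℝ} {m : ℕ} (hm : 0 < m) (hm₁ : (m : ℝ) < s)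
    {f : B → ℝ} (hf : ContDiff ℝ (m : ℕ∞) f)
    (hH : ∀ x y : B, ‖iteratedFDeriv ℝ m f x - iteratedFDeriv ℝ m f y‖ ≤ ‖x - y‖ ^ (s - m))
    (x : B) (hx0 : x ≠ 0) :
    |f x - ∑ k ∈ Finset.range (m + 1),
        ((k.factorial : ℝ))⁻¹ * iteratedFDeriv ℝ k f 0 (fun _ => x)| ≤ ‖x‖ ^ s := by
  set A : ℕ → ℝ → ℝ := fun k t => iteratedFDeriv ℝ k f (t • x) (fun _ => x) with hA
  set b : ℕ → ℝ → ℝ :=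
    fun j t => (j : ℝ) * ((j.factorial : ℝ))⁻¹ * (1 - t) ^ (j - 1) * A j t with hb
  set φ : ℝ → ℝ := fun t =>
    (∑ k ∈ Finset.range m, ((1 - t) ^ k * ((k.factorial : ℝ))⁻¹) * A k t)
      + ((1 - t) ^ m * ((m.factorial : ℝ))⁻¹) * A m 0 with hφdef
  set ψ : ℝ → ℝ :=
    fun t => ((m : ℝ) * ((m.factorial : ℝ))⁻¹ * (1 - t) ^ (m - 1)) * (A m t - A m 0) with hψ
  have hterm : ∀ t : ℝ, ∀ k ∈ Finset.range m,
      HasDerivAt (fun t : ℝ => ((1 - t) ^ k * ((k.factorial : ℝ))⁻¹) * A k t)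
        (b (k + 1) t - b k t) t := by
    intro t k hkm
    rw [Finset.mem_range] at hkm
    have hc : HasDerivAt (fun t : ℝ => (1 - t) ^ k * ((k.factorial : ℝ))⁻¹)
        ((((k : ℝ)) * (1 - t) ^ (k - 1) * (-1)) * ((k.factorial : ℝ))⁻¹) t :=
      (((hasDerivAt_id t).const_sub 1).pow k).mul_const _
    have hmul := hc.fun_mul (hasDerivAt_iteratedFDeriv_ray hf hkm x t)
    refine hmul.congr_deriv ?_
    have hfac : ((k + 1 : ℕ) : ℝ) * (((k + 1 : ℕ).factorial : ℝ))⁻¹ = ((k.factorial : ℝ))⁻¹ := by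
      rw [Nat.factorial_succ, Nat.cast_mul, mul_inv, ← mul_assoc,
        mul_inv_cancel₀ (by positivity), one_mul]
    simp only [hb, hA, Nat.add_sub_cancel]
    rw [hfac]
    ring
  have hsum : ∀ t : ℝ, HasDerivAt
      (fun t : ℝ => ∑ k ∈ Finset.range m, ((1 - t) ^ k * ((k.factorial : ℝ))⁻¹) * A k t)
      (b m t) t := by
    intro t
    have h := HasDerivAt.fun_sum (fun k hk => hterm t k hk)
    rw [Finset.sum_range_sub (fun j => b j t) m] at h
    simpa [hb] using h
  have hlast : ∀ t : ℝ, HasDerivAt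
      (fun t : ℝ => ((1 - t) ^ m * ((m.factorial : ℝ))⁻¹) * A m 0)
      ((((m : ℝ)) * (1 - t) ^ (m - 1) * (-1)) * ((m.factorial : ℝ))⁻¹ * A m 0) t :=
    fun t => ((((hasDerivAt_id t).const_sub 1).pow m).mul_const _).mul_const _
  have hφ : ∀ t : ℝ, HasDerivAt φ (ψ t) t := by
    intro t
    have h := (hsum t).fun_add (hlast t)
    refine h.congr_deriv ?_
    simp only [hψ, hb]
    ring
  have hxpos : (0 : ℝ) < ‖x‖ := norm_pos_iff.mpr hx0
  have hbound : ∀ t ∈ Set.Ico (0 : ℝ) 1, ‖ψ t‖ ≤ ‖x‖ ^ s := by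
    intro t ht
    obtain ⟨ht0, ht1⟩ := ht
    have h1 := (iteratedFDeriv ℝ m f (t • x) - iteratedFDeriv ℝ m f ((0 : ℝ) • x)).le_opNorm
      (fun _ => x)
    rw [ContinuousMultilinearMap.sub_apply] at h1
    have hprod : (∏ _i : Fin m, ‖x‖) = ‖x‖ ^ m := by
      simp [Finset.prod_const]
    rw [hprod] at h1
    have h2 := hH (t • x) ((0 : ℝ) • x)
    have h3 : ‖t • x - (0 : ℝ) • x‖ ^ (s - (m : ℝ)) ≤ ‖x‖ ^ (s - (m : ℝ)) := by
      apply Real.rpow_le_rpow (norm_nonneg _) _ (by linarith)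
      rw [zero_smul, sub_zero, norm_smul, Real.norm_eq_abs, abs_of_nonneg ht0]
      nlinarith [norm_nonneg x]
    have h4 : |A m t - A m 0| ≤ ‖x‖ ^ (s - (m : ℝ)) * ‖x‖ ^ m := by
      calc |A m t - A m 0| ≤ ‖iteratedFDeriv ℝ m f (t • x) - iteratedFDeriv ℝ m f ((0:ℝ) • x)‖
            * ‖x‖ ^ m := by simpa [hA, Real.norm_eq_abs] using h1
        _ ≤ ‖x‖ ^ (s - (m : ℝ)) * ‖x‖ ^ m := by
            exact mul_le_mul_of_nonneg_right (le_trans h2 h3) (pow_nonneg (norm_nonneg x) m)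
    have h5 : ‖x‖ ^ (s - (m : ℝ)) * ‖x‖ ^ m = ‖x‖ ^ s := by
      rw [← Real.rpow_natCast ‖x‖ m, ← Real.rpow_add hxpos, sub_add_cancel]
    have hc1 : (m : ℝ) * ((m.factorial : ℝ))⁻¹ ≤ 1 := by
      rw [← div_eq_mul_inv]
      exact div_le_one_of_le₀ (by exact_mod_cast Nat.self_le_factorial m)
        (by exact_mod_cast Nat.cast_nonneg m.factorial)
    have hc2 : (1 - t) ^ (m - 1) ≤ 1 := pow_le_one₀ (by linarith) (by linarith)
    have hcnn : (0 : ℝ) ≤ (m : ℝ) * ((m.factorial : ℝ))⁻¹ * (1 - t) ^ (m - 1) :=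
      mul_nonneg (mul_nonneg (Nat.cast_nonneg m) (by positivity)) (pow_nonneg (by linarith) _)
    calc ‖ψ t‖ = ((m : ℝ) * ((m.factorial : ℝ))⁻¹ * (1 - t) ^ (m - 1)) * |A m t - A m 0| := by
          rw [hψ, Real.norm_eq_abs, abs_mul, abs_of_nonneg hcnn]
      _ ≤ 1 * (‖x‖ ^ (s - (m : ℝ)) * ‖x‖ ^ m) := by
          apply mul_le_mul _ h4 (abs_nonneg _) zero_le_one
          calc (m : ℝ) * ((m.factorial : ℝ))⁻¹ * (1 - t) ^ (m - 1)
              ≤ 1 * 1 := by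
                apply mul_le_mul hc1 hc2 (pow_nonneg (by linarith) _) zero_le_one
            _ = 1 := by ring
      _ = ‖x‖ ^ s := by rw [one_mul, h5]
  have hmvt := norm_image_sub_le_of_norm_deriv_le_segment'
    (fun t _ => (hφ t).hasDerivWithinAt) hbound 1 (by constructor <;> norm_num)
  rw [sub_zero, mul_one] at hmvt
  have hφ1 : φ 1 = f x := by
    simp only [hφdef]
    rw [Finset.sum_eq_single_of_mem 0 (Finset.mem_range.mpr hm)
      (fun k _ hk0 => by simp [zero_pow hk0])]
    simp [hA, zero_pow hm.ne']
  have hφ0 : φ 0 = ∑ k ∈ Finset.range (m + 1),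
      ((k.factorial : ℝ))⁻¹ * iteratedFDeriv ℝ k f 0 (fun _ => x) := by
    simp only [hφdef]
    rw [Finset.sum_range_succ]
    simp [hA]
  rw [hφ1, hφ0] at hmvt
  simpa [Real.norm_eq_abs] using hmvt

/-- Quantitative Taylor estimate: the remainder of the Taylor polynomial of order `m` at `0`
is bounded by `‖x‖ ^ s`. -/
theorem taylor_estimate {s : ℝ} {m : ℕ} (hm₁ : (m : ℝ) < s)
    {f : B → ℝ} (hf : ContDiff ℝ (m : ℕ∞) f)
    (hH : ∀ x y : B, ‖iteratedFDeriv ℝ m f x - iteratedFDeriv ℝ m f y‖ ≤ ‖x - y‖ ^ (s - m))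
    (x : B) :
    |f x - ∑ k ∈ Finset.range (m + 1),
        ((k.factorial : ℝ))⁻¹ * iteratedFDeriv ℝ k f 0 (fun _ => x)| ≤ ‖x‖ ^ s := by
  have hs0 : 0 < s := lt_of_le_of_lt (Nat.cast_nonneg m) hm₁
  rcases eq_or_ne x 0 with rfl | hx0
  · rw [Finset.sum_range_succ']
    have hz : ∀ i ∈ Finset.range m,
        ((i + 1).factorial : ℝ)⁻¹ * iteratedFDeriv ℝ (i + 1) f 0 (fun _ => (0 : B)) = 0 := by
      intro i _
      have h0 : (fun _ : Fin (i + 1) => (0 : B)) = 0 := rfl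
      rw [h0, ContinuousMultilinearMap.map_zero, mul_zero]
    rw [Finset.sum_eq_zero hz]
    simp [Real.zero_rpow hs0.ne']
  rcases Nat.eq_zero_or_pos m with rfl | hm
  · have h := hH x 0
    have he : ∀ z : B,
        iteratedFDeriv ℝ 0 f z = (continuousMultilinearCurryFin0 ℝ B ℝ).symm (f z) := by
      intro z; rw [iteratedFDeriv_zero_eq_comp]; rfl
    rw [he, he, ← LinearIsometryEquiv.map_sub, LinearIsometryEquiv.norm_map] at h
    simp only [Nat.cast_zero, sub_zero, Real.norm_eq_abs] at h
    simpa using h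
  · exact taylor_estimate_pos hm hm₁ hf hH x hx0

end ZolotarevAux

section ZolotarevInt

variable {B : Type*} [NormedAddCommGroup B] [NormedSpace ℝ B]
  [SecondCountableTopology B] [MeasurableSpace B] [BorelSpace B]
  {Ω : Type*} [MeasurableSpace Ω] {μ : Measure Ω} [IsProbabilityMeasure μ]

lemma pow_le_one_add_rpow {c : ℝ} (hc : 0 ≤ c) {k : ℕ} {s : ℝ} (hk : (k : ℝ) ≤ s) :
    c ^ k ≤ 1 + c ^ s := by
  rcases le_or_gt c 1 with h | h
  · exact le_trans (pow_le_one₀ hc h) (le_add_of_nonneg_right (Real.rpow_nonneg hc s))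
  · have : c ^ k ≤ c ^ s := by
      rw [← Real.rpow_natCast c k]
      exact Real.rpow_le_rpow_of_exponent_le h.le hk
    linarith

lemma integrable_diag_multilinear {s : ℝ} {k : ℕ} (hk : (k : ℝ) ≤ s)
    {Z : Ω → B} (hZ : Measurable Z) (hZs : Integrable (fun ω => ‖Z ω‖ ^ s) μ)
    (β : ContinuousMultilinearMap ℝ (fun _ : Fin k => B) ℝ) :
    Integrable (fun ω => β (fun _ => Z ω)) μ := by
  have hmeas : Measurable (fun ω => β (fun _ : Fin k => Z ω)) :=
    β.coe_continuous.measurable.comp (measurable_pi_lambda _ fun _ => hZ)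
  refine Integrable.mono' (((integrable_const (1 : ℝ)).add hZs).const_mul ‖β‖)
    hmeas.aestronglyMeasurable (Filter.Eventually.of_forall fun ω => ?_)
  calc ‖β (fun _ : Fin k => Z ω)‖ ≤ ‖β‖ * ∏ _i : Fin k, ‖Z ω‖ := β.le_opNorm _
    _ = ‖β‖ * ‖Z ω‖ ^ k := by simp [Finset.prod_const]
    _ ≤ ‖β‖ * (1 + ‖Z ω‖ ^ s) :=
        mul_le_mul_of_nonneg_left (pow_le_one_add_rpow (norm_nonneg _) hk) (norm_nonneg β)

end ZolotarevInt

/-- Let `B` be a separable Banach space, `s > 0`, `m = ⌈s⌉ - 1` (so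
`m < s ≤ m + 1`), and let `X`, `Y` be Borel measurable `B`-valued random variables with
`E‖X‖^s, E‖Y‖^s < ∞`.  The Zolotarev distance `ζ_s(X,Y)` is finite (i.e. the set of values
`|E f(X) - E f(Y)|` over the class `F_s` is bounded above) if and only if
`E α(X,…,X) = E α(Y,…,Y)` for every bounded `k`-linear form `α` with `1 ≤ k ≤ m`. -/
theorem zolotarev_distance_finite_iff_equal_moments
    {B : Type*} [NormedAddCommGroup B] [NormedSpace ℝ B] [CompleteSpace B]
    [TopologicalSpace.SeparableSpace B] [MeasurableSpace B] [BorelSpace B]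
    {Ω : Type*} [MeasurableSpace Ω] {μ : Measure Ω} [IsProbabilityMeasure μ]
    (s : ℝ) (hs : 0 < s) (m : ℕ) (hm₁ : (m : ℝ) < s) (hm₂ : s ≤ m + 1)
    {X Y : Ω → B} (hX : Measurable X) (hY : Measurable Y)
    (hXs : Integrable (fun ω => ‖X ω‖ ^ s) μ)
    (hYs : Integrable (fun ω => ‖Y ω‖ ^ s) μ) :
    BddAbove {r : ℝ | ∃ f : B → ℝ,
        ContDiff ℝ m f ∧
        (∀ x y : B, ‖iteratedFDeriv ℝ m f x - iteratedFDeriv ℝ m f y‖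
            ≤ ‖x - y‖ ^ (s - m)) ∧
        r = |∫ ω, f (X ω) ∂μ - ∫ ω, f (Y ω) ∂μ|} ↔
    (∀ k : ℕ, 1 ≤ k → k ≤ m →
      ∀ α : ContinuousMultilinearMap ℝ (fun _ : Fin k => B) ℝ,
        ∫ ω, α (fun _ => X ω) ∂μ = ∫ ω, α (fun _ => Y ω) ∂μ) := by
  haveI : SecondCountableTopology B := UniformSpace.secondCountable_of_separable B
  constructor
  · -- boundedness implies equal moments
    rintro ⟨M, hM⟩ k hk1 hkm α
    by_contra hne
    set d := ∫ ω, α (fun _ => X ω) ∂μ - ∫ ω, α (fun _ => Y ω) ∂μ with hd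
    have hd0 : d ≠ 0 := sub_ne_zero.mpr hne
    have key : ∀ n : ℕ, (n : ℝ) * |d| ≤ M := by
      intro n
      have hmem : (n : ℝ) * |d| ∈ {r : ℝ | ∃ f : B → ℝ,
          ContDiff ℝ m f ∧
          (∀ x y : B, ‖iteratedFDeriv ℝ m f x - iteratedFDeriv ℝ m f y‖
              ≤ ‖x - y‖ ^ (s - m)) ∧
          r = |∫ ω, f (X ω) ∂μ - ∫ ω, f (Y ω) ∂μ|} := by
        refine ⟨fun x => ((n : ℝ) • α) (fun _ => x), ?_, ?_, ?_⟩
        · exact ((n : ℝ) • α).contDiff.comp (contDiff_pi.mpr fun _ => contDiff_id)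
        · intro x y
          rw [iteratedFDeriv_diag_multilinear_const hkm ((n : ℝ) • α) x y, sub_self, norm_zero]
          exact Real.rpow_nonneg (norm_nonneg _) _
        · simp only [ContinuousMultilinearMap.smul_apply, smul_eq_mul]
          rw [integral_const_mul, integral_const_mul, ← mul_sub, abs_mul,
            Nat.abs_cast]
      exact hM hmem
    obtain ⟨n, hn⟩ := exists_nat_gt (M / |d|)
    have : M < (n : ℝ) * |d| := by
      rw [div_lt_iff₀ (abs_pos.mpr hd0)] at hn
      linarith
    linarith [key n]
  · -- equal moments imply boundedness
    intro hmom
    refine ⟨∫ ω, ‖X ω‖ ^ s ∂μ + ∫ ω, ‖Y ω‖ ^ s ∂μ, ?_⟩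
    rintro r ⟨f, hf, hH, rfl⟩
    have hf' : ContDiff ℝ (m : ℕ∞) f := hf
    set T : B → ℝ := fun x => ∑ k ∈ Finset.range (m + 1),
        ((k.factorial : ℝ))⁻¹ * iteratedFDeriv ℝ k f 0 (fun _ => x) with hT
    set R : B → ℝ := fun x => f x - T x with hR
    have hTay : ∀ x, |R x| ≤ ‖x‖ ^ s := fun x => taylor_estimate hm₁ hf' hH x
    have hTc : Continuous T := by
      apply continuous_finset_sum
      intro k _
      exact continuous_const.mul
        ((iteratedFDeriv ℝ k f 0).coe_continuous.comp (continuous_pi fun _ => continuous_id))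
    have hfc : Continuous f := hf.continuous
    -- integrability of the polynomial part
    have hks : ∀ k : ℕ, k ≤ m → (k : ℝ) ≤ s := fun k hk =>
      le_trans (by exact_mod_cast hk) hm₁.le
    have hTint : ∀ (Z : Ω → B), Measurable Z → Integrable (fun ω => ‖Z ω‖ ^ s) μ →
        ∀ k ∈ Finset.range (m + 1), Integrable
          (fun ω => ((k.factorial : ℝ))⁻¹ * iteratedFDeriv ℝ k f 0 (fun _ => Z ω)) μ := by
      intro Z hZ hZs k hk
      rw [Finset.mem_range, Nat.lt_succ_iff] at hk
      exact (integrable_diag_multilinear (hks k hk) hZ hZs (iteratedFDeriv ℝ k f 0)).const_mul _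
    have hTX : Integrable (fun ω => T (X ω)) μ := by
      rw [hT]; exact integrable_finset_sum _ (hTint X hX hXs)
    have hTY : Integrable (fun ω => T (Y ω)) μ := by
      rw [hT]; exact integrable_finset_sum _ (hTint Y hY hYs)
    have hRint : ∀ (Z : Ω → B), Measurable Z → Integrable (fun ω => ‖Z ω‖ ^ s) μ →
        Integrable (fun ω => R (Z ω)) μ := by
      intro Z hZ hZs
      refine Integrable.mono' hZs
        (((hfc.sub hTc).measurable.comp hZ).aestronglyMeasurable)
        (Filter.Eventually.of_forall fun ω => ?_)
      simpa [Real.norm_eq_abs] using hTay (Z ω)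
    have hRX := hRint X hX hXs
    have hRY := hRint Y hY hYs
    -- split the integrals
    have hsplit : ∀ (Z : Ω → B), Measurable Z → Integrable (fun ω => ‖Z ω‖ ^ s) μ →
        Integrable (fun ω => T (Z ω)) μ → Integrable (fun ω => R (Z ω)) μ →
        ∫ ω, f (Z ω) ∂μ = (∫ ω, T (Z ω) ∂μ) + ∫ ω, R (Z ω) ∂μ := by
      intro Z hZ hZs hTZ hRZ
      rw [← integral_add hTZ hRZ]
      congr 1
      funext ω
      simp [hR]
    rw [hsplit X hX hXs hTX hRX, hsplit Y hY hYs hTY hRY]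
    -- the polynomial parts agree
    have hTXY : ∫ ω, T (X ω) ∂μ = ∫ ω, T (Y ω) ∂μ := by
      rw [hT, integral_finset_sum _ (hTint X hX hXs), integral_finset_sum _ (hTint Y hY hYs)]
      refine Finset.sum_congr rfl fun k hk => ?_
      rw [Finset.mem_range, Nat.lt_succ_iff] at hk
      rw [integral_const_mul, integral_const_mul]
      congr 1
      rcases Nat.eq_zero_or_pos k with rfl | hkpos
      · simp
      · exact hmom k hkpos hk (iteratedFDeriv ℝ k f 0)
    rw [hTXY]
    have habs : ∀ (Z : Ω → B) (hZ : Measurable Z) (hZs : Integrable (fun ω => ‖Z ω‖ ^ s) μ),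
        |∫ ω, R (Z ω) ∂μ| ≤ ∫ ω, ‖Z ω‖ ^ s ∂μ := by
      intro Z hZ hZs
      calc |∫ ω, R (Z ω) ∂μ| ≤ ∫ ω, |R (Z ω)| ∂μ := by
            simpa [Real.norm_eq_abs] using norm_integral_le_integral_norm (fun ω => R (Z ω))
        _ ≤ ∫ ω, ‖Z ω‖ ^ s ∂μ :=
            integral_mono (hRint Z hZ hZs).abs hZs fun ω => hTay (Z ω)
    have h1 := habs X hX hXs
    have h2 := habs Y hY hYs
    have h3 : |(∫ ω, T (Y ω) ∂μ) + (∫ ω, R (X ω) ∂μ)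
        - ((∫ ω, T (Y ω) ∂μ) + ∫ ω, R (Y ω) ∂μ)|
        ≤ |∫ ω, R (X ω) ∂μ| + |∫ ω, R (Y ω) ∂μ| := by
      rw [add_sub_add_left_eq_sub]
      exact abs_sub _ _
    calc |(∫ ω, T (Y ω) ∂μ) + (∫ ω, R (X ω) ∂μ)
        - ((∫ ω, T (Y ω) ∂μ) + ∫ ω, R (Y ω) ∂μ)|
        ≤ |∫ ω, R (X ω) ∂μ| + |∫ ω, R (Y ω) ∂μ| := h3
      _ ≤ (∫ ω, ‖X ω‖ ^ s ∂μ) + ∫ ω, ‖Y ω‖ ^ s ∂μ := add_le_add h1 h2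
end

section
/- Let S be an arbitrary set (regarded as a discrete topological space), let k ≥ 1 be an integer, and let α be a bounded k-linear form on c₀(S), the Banach space of real-valued functions on S vanishing at infinity with the supremum norm. Then there exists a countable subset A ⊆ S such that α(f₁,…,f_k) = α(g₁,…,g_k) whenever f₁,…,f_k, g₁,…,g_k ∈ c₀(S) satisfy fᵢ(s) = gᵢ(s) for every i ∈ {1,…,k} and every s ∈ A. -/
open MeasureTheory Filter
open scoped BigOperators ZeroAtInfty Classical

namespace C0Countable

variable {S : Type*} [TopologicalSpace S] [DiscreteTopology S]

/-- The element of `c₀(S)` equal to `v` on the finite set `F` and `0` elsewhere. -/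
noncomputable def finC (F : Finset S) (v : S → ℝ) : ZeroAtInftyContinuousMap S ℝ where
  toFun := (↑F : Set S).indicator v
  continuous_toFun := continuous_of_discreteTopology
  zero_at_infty' := by
    rw [cocompact_eq_cofinite]
    refine Tendsto.congr' ?_ tendsto_const_nhds
    filter_upwards [F.finite_toSet.compl_mem_cofinite] with s hs
    exact (Set.indicator_of_notMem hs v).symm

lemma finC_apply_mem {F : Finset S} {s : S} (hs : s ∈ F) (v : S → ℝ) :
    finC F v s = v s := Set.indicator_of_mem (by exact_mod_cast hs) v

lemma finC_apply_not_mem {F : Finset S} {s : S} (hs : s ∉ F) (v : S → ℝ) :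
    finC F v s = 0 := Set.indicator_of_notMem (by exact_mod_cast hs) v

/-- Kronecker delta. -/
noncomputable def delta (s : S) : ZeroAtInftyContinuousMap S ℝ :=
  finC {s} (fun _ => 1)

@[simp] lemma delta_apply (s t : S) : delta s t = if t = s then 1 else 0 := by
  by_cases h : t = s
  · simp [delta, h, finC_apply_mem (Finset.mem_singleton_self s)]
  · simp [delta, h, finC_apply_not_mem (Finset.notMem_singleton.mpr h)]

omit [DiscreteTopology S] in
lemma norm_eval_le (g : ZeroAtInftyContinuousMap S ℝ) (s : S) : |g s| ≤ ‖g‖ := by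
  rw [← ZeroAtInftyContinuousMap.norm_toBCF_eq_norm]
  exact (g.toBCF.norm_coe_le_norm s)

omit [DiscreteTopology S] in
lemma norm_le_of_eval (g : ZeroAtInftyContinuousMap S ℝ) {C : ℝ} (hC : 0 ≤ C)
    (h : ∀ s, |g s| ≤ C) : ‖g‖ ≤ C := by
  rw [← ZeroAtInftyContinuousMap.norm_toBCF_eq_norm]
  exact BoundedContinuousFunction.norm_le hC |>.2 h

lemma norm_finC_le (F : Finset S) (v : S → ℝ) {C : ℝ} (hC : 0 ≤ C)
    (h : ∀ s ∈ F, |v s| ≤ C) : ‖finC F v‖ ≤ C := by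
  refine norm_le_of_eval _ hC fun s => ?_
  by_cases hs : s ∈ F
  · rw [finC_apply_mem hs]; exact h s hs
  · rw [finC_apply_not_mem hs]; simpa using hC

omit [DiscreteTopology S] in
lemma coe_sum {ι : Type*} (s : Finset ι) (f : ι → ZeroAtInftyContinuousMap S ℝ) :
    ⇑(∑ i ∈ s, f i) = ∑ i ∈ s, ⇑(f i) :=
  map_sum (⟨⟨fun g => ⇑g, ZeroAtInftyContinuousMap.coe_zero⟩,
    fun f g => ZeroAtInftyContinuousMap.coe_add f g⟩ :
    ZeroAtInftyContinuousMap S ℝ →+ (S → ℝ)) f s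

lemma finC_eq_sum (F : Finset S) (v : S → ℝ) :
    finC F v = ∑ s ∈ F, v s • delta s := by
  ext t
  rw [coe_sum]
  simp only [Finset.sum_apply, ZeroAtInftyContinuousMap.coe_smul, Pi.smul_apply,
    delta_apply, smul_eq_mul, mul_ite, mul_one, mul_zero]
  rw [Finset.sum_ite_eq F t v]
  by_cases ht : t ∈ F
  · rw [finC_apply_mem ht, if_pos ht]
  · rw [finC_apply_not_mem ht, if_neg ht]

/-- The set `{s : δ ≤ |h s|}` is finite for `h ∈ c₀(S)`. -/
lemma finite_large (h : ZeroAtInftyContinuousMap S ℝ) {δ : ℝ} (hδ : 0 < δ) :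
    {s : S | δ ≤ |h s|}.Finite := by
  have h0 : Tendsto ⇑h (cofinite : Filter S) (nhds 0) := by
    rw [← cocompact_eq_cofinite]; exact zero_at_infty h
  have : ∀ᶠ s in (cofinite : Filter S), dist (h s) 0 < δ :=
    (Metric.tendsto_nhds.mp h0) δ hδ
  rw [eventually_cofinite] at this
  refine this.subset fun s hs => ?_
  simp only [Set.mem_setOf_eq, Real.dist_eq, sub_zero, not_lt]
  exact hs

/-- sign of a boolean -/
def sgn (b : Bool) : ℝ := if b then 1 else -1

lemma abs_sgn (b : Bool) : |sgn b| = 1 := by cases b <;> simp [sgn]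

/-- Orthogonality of products of independent signs. -/
lemma orth {S' : Type*} (F : Finset S') {k : ℕ} (m m' : Fin k → S')
    (hm : ∀ i, m i ∈ F) (hm' : ∀ i, m' i ∈ F) :
    ∑ ε : (Fin k × {x // x ∈ F}) → Bool,
        (∏ i, (if h : m i ∈ F then sgn (ε (i, ⟨m i, h⟩)) else 0)) *
        (∏ i, (if h : m' i ∈ F then sgn (ε (i, ⟨m' i, h⟩)) else 0))
      = if m = m' then (2:ℝ)^(Fintype.card (Fin k × {x // x ∈ F})) else 0 := by
  classical
  set J := Fin k × {x // x ∈ F} with hJ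
  set M : Fin k → {x // x ∈ F} := fun i => ⟨m i, hm i⟩ with hM
  set M' : Fin k → {x // x ∈ F} := fun i => ⟨m' i, hm' i⟩ with hM'
  set G : J → Bool → ℝ :=
    fun j b => (if j.2 = M j.1 then sgn b else 1) * (if j.2 = M' j.1 then sgn b else 1) with hG
  have step1 : ∀ ε : J → Bool,
      (∏ i, (if h : m i ∈ F then sgn (ε (i, ⟨m i, h⟩)) else 0)) *
      (∏ i, (if h : m' i ∈ F then sgn (ε (i, ⟨m' i, h⟩)) else 0))
      = ∏ j : J, G j (ε j) := by
    intro ε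
    have e1 : ∀ i, (if h : m i ∈ F then sgn (ε (i, ⟨m i, h⟩)) else 0) = sgn (ε (i, M i)) :=
      fun i => dif_pos (hm i)
    have e1' : ∀ i, (if h : m' i ∈ F then sgn (ε (i, ⟨m' i, h⟩)) else 0) = sgn (ε (i, M' i)) :=
      fun i => dif_pos (hm' i)
    simp only [e1, e1']
    rw [show (∏ j : J, G j (ε j)) = ∏ i : Fin k, ∏ t : {x // x ∈ F}, G (i, t) (ε (i, t)) from
      Fintype.prod_prod_type _, ← Finset.prod_mul_distrib]
    refine Finset.prod_congr rfl fun i _ => ?_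
    have p1 : ∏ t : {x // x ∈ F}, (if t = M i then sgn (ε (i, t)) else 1) = sgn (ε (i, M i)) := by
      rw [Finset.prod_ite_eq' Finset.univ (M i) (fun t => sgn (ε (i, t)))]
      simp
    have p2 : ∏ t : {x // x ∈ F}, (if t = M' i then sgn (ε (i, t)) else 1) = sgn (ε (i, M' i)) := by
      rw [Finset.prod_ite_eq' Finset.univ (M' i) (fun t => sgn (ε (i, t)))]
      simp
    rw [hG]
    simp only
    rw [Finset.prod_mul_distrib, p1, p2]
  simp only [step1]
  have step3 : ∑ ε : J → Bool, ∏ j : J, G j (ε j) = ∏ j : J, ∑ b : Bool, G j b := by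
    rw [Finset.prod_univ_sum (fun _ : J => (Finset.univ : Finset Bool)) G]
    rw [Fintype.piFinset_univ]
  rw [step3]
  by_cases hmm : m = m'
  · subst hmm
    have hMM : M' = M := rfl
    rw [if_pos rfl]
    have : ∀ j : J, ∑ b : Bool, G j b = 2 := by
      intro j
      by_cases hj : j.2 = M j.1 <;> simp [hG, hMM, hj, sgn] <;> norm_num
    rw [Finset.prod_congr rfl (fun j _ => this j)]
    simp [hJ]
  · rw [if_neg hmm]
    obtain ⟨i₀, hi₀⟩ : ∃ i, m i ≠ m' i := by
      by_contra hc
      push_neg at hc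
      exact hmm (funext hc)
    refine Finset.prod_eq_zero (Finset.mem_univ ((i₀, M i₀) : J)) ?_
    have h1 : (M i₀ : {x // x ∈ F}) ≠ M' i₀ := by
      simp [hM, hM', Subtype.ext_iff, hi₀]
    simp [hG, h1, sgn]

section Multilinear

variable {k : ℕ} (α : ContinuousMultilinearMap ℝ (fun _ : Fin k => ZeroAtInftyContinuousMap S ℝ) ℝ)

/-- The coefficients of the multilinear form. -/
noncomputable def coeffs (m : Fin k → S) : ℝ := α (fun i => delta (m i))

lemma expand (F : Fin k → Finset S) (v : Fin k → S → ℝ) :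
    α (fun i => finC (F i) (v i)) =
      ∑ m ∈ Fintype.piFinset F, (∏ i, v i (m i)) * coeffs α m := by
  have h1 : (fun i => finC (F i) (v i)) = fun i => ∑ s ∈ F i, v i s • delta s := by
    funext i; exact finC_eq_sum (F i) (v i)
  rw [h1, α.map_sum_finset (fun i s => v i s • delta s) F]
  refine Finset.sum_congr rfl fun m _ => ?_
  rw [α.map_smul_univ]
  simp [coeffs, smul_eq_mul]

/-- Bessel-type inequality for the coefficients. -/
lemma bessel (F : Finset S) :
    ∑ m ∈ Fintype.piFinset (fun _ : Fin k => F), (coeffs α m)^2 ≤ ‖α‖^2 := by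
  classical
  set J := Fin k × {x // x ∈ F} with hJ
  set v : (J → Bool) → Fin k → S → ℝ :=
    fun ε i s => if h : s ∈ F then sgn (ε (i, ⟨s, h⟩)) else 0 with hv
  set P := Fintype.piFinset (fun _ : Fin k => F) with hP
  have hexp : ∀ ε : J → Bool,
      α (fun i => finC F (v ε i)) = ∑ m ∈ P, (∏ i, v ε i (m i)) * coeffs α m :=
    fun ε => expand α _ _
  have hnorm : ∀ ε : J → Bool, (α (fun i => finC F (v ε i)))^2 ≤ ‖α‖^2 := by
    intro ε
    have h1 : ‖α (fun i => finC F (v ε i))‖ ≤ ‖α‖ * ∏ i : Fin k, ‖finC F (v ε i)‖ :=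
      α.le_opNorm _
    have h2 : ∏ i : Fin k, ‖finC F (v ε i)‖ ≤ 1 := by
      refine Finset.prod_le_one (fun i _ => norm_nonneg _) (fun i _ => ?_)
      refine norm_finC_le F _ zero_le_one fun s hs => ?_
      simp only [hv, dif_pos hs, abs_sgn, le_refl]
    have h3 : ‖α (fun i => finC F (v ε i))‖ ≤ ‖α‖ :=
      h1.trans (by nlinarith [norm_nonneg α])
    calc (α (fun i => finC F (v ε i)))^2 = ‖α (fun i => finC F (v ε i))‖^2 := by
          rw [Real.norm_eq_abs, sq_abs]
      _ ≤ ‖α‖^2 := by nlinarith [norm_nonneg (α (fun i => finC F (v ε i)))]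
  have key : ∑ ε : J → Bool, (α (fun i => finC F (v ε i)))^2
      = (2:ℝ)^(Fintype.card J) * ∑ m ∈ P, (coeffs α m)^2 := by
    have e1 : ∀ ε : J → Bool, (α (fun i => finC F (v ε i)))^2
        = ∑ m ∈ P, ∑ m' ∈ P,
            ((∏ i, v ε i (m i)) * (∏ i, v ε i (m' i))) * (coeffs α m * coeffs α m') := by
      intro ε
      rw [hexp ε, sq, Finset.sum_mul_sum]
      refine Finset.sum_congr rfl fun m _ => Finset.sum_congr rfl fun m' _ => ?_
      ring
    simp only [e1]
    rw [Finset.sum_comm]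
    have e2 : ∀ m ∈ P,
        (∑ ε : J → Bool, ∑ m' ∈ P,
          ((∏ i, v ε i (m i)) * (∏ i, v ε i (m' i))) * (coeffs α m * coeffs α m'))
        = (2:ℝ)^(Fintype.card J) * (coeffs α m)^2 := by
      intro m hm
      rw [Finset.sum_comm]
      have hmF : ∀ i, m i ∈ F := fun i => (Fintype.mem_piFinset.mp hm) i
      have e3 : ∀ m' ∈ P,
          (∑ ε : J → Bool,
            ((∏ i, v ε i (m i)) * (∏ i, v ε i (m' i))) * (coeffs α m * coeffs α m'))
          = (if m = m' then (2:ℝ)^(Fintype.card J) else 0) * (coeffs α m * coeffs α m') := by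
        intro m' hm'
        have hm'F : ∀ i, m' i ∈ F := fun i => (Fintype.mem_piFinset.mp hm') i
        rw [← Finset.sum_mul]
        congr 1
        exact orth F m m' hmF hm'F
      rw [Finset.sum_congr rfl e3]
      simp only [ite_mul, zero_mul, Finset.sum_ite_eq, hm, if_true, sq]
    rw [Finset.sum_congr rfl e2, ← Finset.mul_sum]
  have upper : ∑ ε : J → Bool, (α (fun i => finC F (v ε i)))^2
      ≤ (2:ℝ)^(Fintype.card J) * ‖α‖^2 := by
    calc ∑ ε : J → Bool, (α (fun i => finC F (v ε i)))^2
        ≤ ∑ _ε : J → Bool, ‖α‖^2 := Finset.sum_le_sum (fun ε _ => hnorm ε)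
      _ = (Fintype.card (J → Bool) : ℝ) * ‖α‖^2 := by
          rw [Finset.sum_const, Finset.card_univ, nsmul_eq_mul]
      _ = (2:ℝ)^(Fintype.card J) * ‖α‖^2 := by
          rw [Fintype.card_fun]
          push_cast
          norm_num
  rw [key] at upper
  have h2 : (0:ℝ) < (2:ℝ)^(Fintype.card J) := by positivity
  exact le_of_mul_le_mul_left upper h2

/-- Level sets of the coefficient function are finite. -/
lemma finite_level {ε : ℝ} (hε : 0 < ε) : {m : Fin k → S | ε ≤ |coeffs α m|}.Finite := by
  by_contra hinf
  obtain ⟨n, hn⟩ := exists_nat_gt (‖α‖^2 / ε^2)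
  obtain ⟨t, hts, htc⟩ := (show Set.Infinite _ from hinf).exists_subset_card_eq n
  set F : Finset S := t.biUnion (fun m => Finset.image m Finset.univ) with hF
  have hsub : t ⊆ Fintype.piFinset (fun _ : Fin k => F) := by
    intro m hm
    rw [Fintype.mem_piFinset]
    intro i
    exact Finset.mem_biUnion.mpr ⟨m, hm, Finset.mem_image_of_mem m (Finset.mem_univ i)⟩
  have h1 : (n : ℝ) * ε^2 ≤ ∑ m ∈ t, (coeffs α m)^2 := by
    have hb : ∀ m ∈ t, ε^2 ≤ (coeffs α m)^2 := by
      intro m hm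
      have h := hts hm
      simp only [Set.mem_setOf_eq] at h
      calc ε^2 ≤ |coeffs α m|^2 := by nlinarith [abs_nonneg (coeffs α m)]
        _ = (coeffs α m)^2 := sq_abs _
    calc (n:ℝ) * ε^2 = ∑ _m ∈ t, ε^2 := by rw [Finset.sum_const, htc, nsmul_eq_mul]
      _ ≤ _ := Finset.sum_le_sum hb
  have h2 : ∑ m ∈ t, (coeffs α m)^2
      ≤ ∑ m ∈ Fintype.piFinset (fun _ : Fin k => F), (coeffs α m)^2 :=
    Finset.sum_le_sum_of_subset_of_nonneg hsub (fun _ _ _ => sq_nonneg _)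
  have hfin := (h1.trans (h2.trans (bessel α F)))
  rw [div_lt_iff₀ (by positivity)] at hn
  nlinarith

/-- If one argument vanishes on a set carrying all the coefficients, the form vanishes. -/
lemma vanish (A : Set S) (hA : ∀ m : Fin k → S, coeffs α m ≠ 0 → ∀ i, m i ∈ A)
    (h : Fin k → ZeroAtInftyContinuousMap S ℝ) (i₀ : Fin k)
    (h0 : ∀ s ∈ A, h i₀ s = 0) : α h = 0 := by
  set C : ℝ := ‖α‖ * k * ‖h‖^(k-1) with hC
  have hC0 : 0 ≤ C := by positivity
  have main : ∀ δ : ℝ, 0 < δ → |α h| ≤ C * δ := by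
    intro δ hδ
    set F : Fin k → Finset S := fun i => (finite_large (h i) hδ).toFinset with hFdef
    set t : Fin k → ZeroAtInftyContinuousMap S ℝ := fun i => finC (F i) (⇑(h i)) with htdef
    have htz : α t = 0 := by
      rw [htdef]
      rw [expand α F (fun i => ⇑(h i))]
      refine Finset.sum_eq_zero fun m hm => ?_
      by_cases hc : coeffs α m = 0
      · rw [hc, mul_zero]
      · have hmem : m i₀ ∈ A := hA m hc i₀
        rw [Finset.prod_eq_zero (Finset.mem_univ i₀) (h0 _ hmem), zero_mul]
    have htn : ∀ i, ‖t i‖ ≤ ‖h i‖ := by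
      intro i
      exact norm_finC_le _ _ (norm_nonneg _) (fun s _ => norm_eval_le (h i) s)
    have htn' : ‖t‖ ≤ ‖h‖ := by
      rw [pi_norm_le_iff_of_nonneg (norm_nonneg h)]
      exact fun i => (htn i).trans (norm_le_pi_norm h i)
    have hdiff : ‖h - t‖ ≤ δ := by
      rw [pi_norm_le_iff_of_nonneg hδ.le]
      intro i
      refine norm_le_of_eval _ hδ.le fun s => ?_
      have : (h - t) i s = h i s - t i s := by
        simp [ZeroAtInftyContinuousMap.coe_sub]
      rw [this]
      by_cases hs : s ∈ F i
      · rw [htdef]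
        simp only
        rw [finC_apply_mem hs]
        simpa using hδ.le
      · rw [htdef]
        simp only
        rw [finC_apply_not_mem hs, sub_zero]
        have : ¬ δ ≤ |h i s| := by
          rw [hFdef] at hs
          simpa [Set.Finite.mem_toFinset] using hs
        linarith [abs_nonneg (h i s), (not_le.mp this)]
    have himg := α.norm_image_sub_le h t
    rw [htz, sub_zero] at himg
    have hmax : max ‖h‖ ‖t‖ = ‖h‖ := max_eq_left htn'
    rw [hmax] at himg
    simp only [Fintype.card_fin, Real.norm_eq_abs] at himg
    calc |α h| ≤ ‖α‖ * k * ‖h‖^(k-1) * ‖h - t‖ := himg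
      _ ≤ C * δ := by
          rw [hC]
          exact mul_le_mul_of_nonneg_left hdiff (by positivity)
  by_contra hne
  have hpos : 0 < |α h| := abs_pos.mpr hne
  have hu : (0:ℝ) < 2*(C+1) := by positivity
  have hle := main (|α h| / (2*(C+1))) (by positivity)
  have h1 : C * (|α h| / (2*(C+1))) < |α h| := by
    rw [mul_div_assoc', div_lt_iff₀ hu]
    nlinarith
  linarith

/-- The coefficients live on a countable set. -/
lemma countable_support :
    ∃ A : Set S, A.Countable ∧ ∀ m : Fin k → S, coeffs α m ≠ 0 → ∀ i, m i ∈ A := by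
  set Cs : Set (Fin k → S) := {m | coeffs α m ≠ 0} with hCs
  have hCsub : Cs ⊆ ⋃ n : ℕ, {m : Fin k → S | 1/(n+1 : ℝ) ≤ |coeffs α m|} := by
    intro m hm
    have hpos : 0 < |coeffs α m| := abs_pos.mpr hm
    obtain ⟨n, hn⟩ := exists_nat_one_div_lt hpos
    refine Set.mem_iUnion.mpr ⟨n, ?_⟩
    have : 1/((n:ℝ)+1) < |coeffs α m| := by exact_mod_cast hn
    exact le_of_lt this
  have hCc : Cs.Countable := by
    refine Set.Countable.mono hCsub ?_
    refine Set.countable_iUnion fun n => ?_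
    exact (finite_level α (by positivity)).countable
  refine ⟨⋃ m ∈ Cs, Set.range m, ?_, ?_⟩
  · exact Set.Countable.biUnion hCc fun m _ => (Set.finite_range m).countable
  · intro m hm i
    exact Set.mem_biUnion hm ⟨i, rfl⟩

end Multilinear
end C0Countable

open C0Countable

/-- Every bounded `k`-linear form on `c₀(S)` (for an arbitrary discrete
set `S`) depends only on the restriction of its arguments to some countable subset `A ⊆ S`. -/
theorem c0_multilinear_form_countably_determined
    {S : Type*} [TopologicalSpace S] [DiscreteTopology S]
    {k : ℕ} (hk : 1 ≤ k)
    (α : ContinuousMultilinearMap ℝ (fun _ : Fin k => ZeroAtInftyContinuousMap S ℝ) ℝ) :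
    ∃ A : Set S, A.Countable ∧
      ∀ f g : Fin k → ZeroAtInftyContinuousMap S ℝ,
        (∀ i : Fin k, ∀ s ∈ A, f i s = g i s) → α f = α g := by
  obtain ⟨A, hAc, hA⟩ := countable_support α
  refine ⟨A, hAc, fun f g hfg => ?_⟩
  have key : ∀ t : Finset (Fin k), α (fun i => if i ∈ t then f i else g i) = α g := by
    intro t
    induction t using Finset.induction with
    | empty => simp
    | @insert i₀ t hi₀ ih =>
      have hupd : (fun i => if i ∈ insert i₀ t then f i else g i)
          = Function.update (fun i => if i ∈ t then f i else g i) i₀ (f i₀) := by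
        funext i
        by_cases hii : i = i₀
        · subst hii; simp [Function.update_self]
        · simp [Function.update_of_ne hii, Finset.mem_insert, hii]
      rw [hupd]
      have hsplit : f i₀ = g i₀ + (f i₀ - g i₀) := by abel
      rw [hsplit, α.map_update_add]
      have e1 : Function.update (fun i => if i ∈ t then f i else g i) i₀ (g i₀)
          = (fun i => if i ∈ t then f i else g i) := by
        funext i
        by_cases hii : i = i₀
        · subst hii; simp [Function.update_self, hi₀]
        · simp [Function.update_of_ne hii]
      have e2 : α (Function.update (fun i => if i ∈ t then f i else g i) i₀ (f i₀ - g i₀)) = 0 := by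
        refine vanish α A hA _ i₀ fun s hs => ?_
        rw [Function.update_self]
        have : (f i₀ - g i₀) s = f i₀ s - g i₀ s := by
          simp [ZeroAtInftyContinuousMap.coe_sub]
        rw [this, sub_eq_zero]
        exact hfg i₀ s hs
      rw [e1, ih, e2, add_zero]
  have := key Finset.univ
  simpa using this
end

section
/- Let S be an arbitrary set and let X be a random variable on a probability space with values in c₀(S), the Banach space of real-valued functions on S vanishing at infinity with the supremum norm, such that the real-valued map ω ↦ X(ω)(s) is measurable for every s ∈ S. Then there exists a countable subset S₀ ⊆ S such that for every s ∈ S ∖ S₀ one has X(ω)(s) = 0 for almost every ω. -/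
open MeasureTheory
open scoped ZeroAtInfty ENNReal

/-- For each fixed `ω`, the set where `|X ω s| ≥ ε` is finite (c₀ condition). -/
lemma c0_finite_support {S : Type*} [TopologicalSpace S] [DiscreteTopology S]
    (f : ZeroAtInftyContinuousMap S ℝ) {ε : ℝ} (hε : 0 < ε) :
    {s : S | ε ≤ |f s|}.Finite := by
  have h := f.zero_at_infty'
  rw [Filter.cocompact_eq_cofinite S] at h
  have h2 : ∀ᶠ s in Filter.cofinite, |f s| < ε := by
    have := h (Metric.ball_mem_nhds (0 : ℝ) hε)
    filter_upwards [this] with s hs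
    simpa [Real.dist_eq] using hs
  have h3 : {s : S | ¬ |f s| < ε}.Finite := h2
  exact h3.subset fun s hs => not_lt.mpr hs

/-- If `X` is a `c₀(S)`-valued random variable (on an arbitrary discrete set
`S`) whose point evaluations are measurable, then there is a countable set `S₀ ⊆ S` such
that for every `s ∉ S₀` one has `X(s) = 0` almost surely. -/
theorem c0_pointwise_measurable_ae_zero_off_countable
    {S : Type*} [TopologicalSpace S] [DiscreteTopology S]
    {Ω : Type*} [MeasurableSpace Ω] {μ : Measure Ω} [IsProbabilityMeasure μ]
    (X : Ω → ZeroAtInftyContinuousMap S ℝ)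
    (hX : ∀ s : S, Measurable fun ω => X ω s) :
    ∃ S₀ : Set S, S₀.Countable ∧ ∀ s ∉ S₀, ∀ᵐ ω ∂μ, X ω s = 0 := by
  have hAmeas : ∀ (ε : ℝ) (s : S), MeasurableSet {ω | ε ≤ |X ω s|} := by
    intro ε s
    exact measurableSet_le measurable_const (hX s).abs
  -- Key finiteness: for ε, δ > 0, only finitely many s have μ {ω | ε ≤ |X ω s|} ≥ δ.
  have key : ∀ (ε : ℝ) (δ : ℝ≥0∞), 0 < ε → 0 < δ →
      {s : S | δ ≤ μ {ω | ε ≤ |X ω s|}}.Finite := by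
    intro ε δ hε hδ
    rw [← Set.not_infinite]
    intro h
    obtain ⟨f, hfinj⟩ : ∃ f : ℕ → S, Function.Injective f ∧
        ∀ k, δ ≤ μ {ω | ε ≤ |X ω (f k)|} := by
      let e := h.natEmbedding
      exact ⟨fun k => (e k : S), fun a b hab => e.injective (Subtype.ext hab),
        fun k => (e k).2⟩
    obtain ⟨hfinj, hfδ⟩ := hfinj
    set A : ℕ → Set Ω := fun k => {ω | ε ≤ |X ω (f k)|} with hA
    set B : ℕ → Set Ω := fun n => ⋃ k, A (n + k) with hB
    have hBmeas : ∀ n, MeasurableSet (B n) := fun n =>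
      MeasurableSet.iUnion fun k => hAmeas ε (f (n + k))
    have hBanti : Antitone B := by
      intro a b hab
      intro ω hω
      simp only [hB, Set.mem_iUnion] at hω ⊢
      obtain ⟨k, hk⟩ := hω
      exact ⟨(b - a) + k, by rwa [← Nat.add_assoc, Nat.add_sub_cancel' hab]⟩
    have hBδ : ∀ n, δ ≤ μ (B n) := fun n =>
      le_trans (hfδ n) (measure_mono (by
        intro ω hω; exact Set.mem_iUnion.mpr ⟨0, by exact hω⟩))
    have htend := tendsto_measure_iInter_atTop
      (fun n => (hBmeas n).nullMeasurableSet) hBanti ⟨0, measure_ne_top μ _⟩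
    have hL : δ ≤ μ (⋂ n, B n) := ge_of_tendsto htend (Filter.Eventually.of_forall hBδ)
    have hLpos : μ (⋂ n, B n) ≠ 0 := fun h0 => (hδ.trans_le (h0 ▸ hL)).false
    obtain ⟨ω, hω⟩ := nonempty_of_measure_ne_zero hLpos
    -- ω belongs to every B n : infinitely many k with ε ≤ |X ω (f k)|
    have hinf : {k : ℕ | ε ≤ |X ω (f k)|}.Infinite := by
      apply Set.infinite_of_not_bddAbove
      rintro ⟨N, hN⟩
      have hωB := Set.mem_iInter.mp hω (N + 1)
      simp only [hB, Set.mem_iUnion] at hωB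
      obtain ⟨k, hk⟩ := hωB
      have : N + 1 + k ≤ N := hN hk
      omega
    have hfin := c0_finite_support (X ω) hε
    have himg : f '' {k | ε ≤ |X ω (f k)|} ⊆ {s | ε ≤ |X ω s|} := by
      rintro _ ⟨k, hk, rfl⟩; exact hk
    exact hinf (Set.Finite.of_finite_image (hfin.subset himg) hfinj.injOn)
  -- Define S₀
  refine ⟨⋃ (n : ℕ) (m : ℕ),
      {s : S | ((m : ℝ≥0∞) + 1)⁻¹ ≤ μ {ω | ((n : ℝ) + 1)⁻¹ ≤ |X ω s|}}, ?_, ?_⟩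
  · exact Set.countable_iUnion fun n => Set.countable_iUnion fun m =>
      (key ((n : ℝ) + 1)⁻¹ ((m : ℝ≥0∞) + 1)⁻¹
        (by positivity) (ENNReal.inv_pos.mpr (ENNReal.add_ne_top.mpr
          ⟨ENNReal.natCast_ne_top m, ENNReal.one_ne_top⟩))).countable
  · intro s hs
    simp only [Set.mem_iUnion, not_exists, Set.mem_setOf_eq, not_le] at hs
    have hzero : ∀ n : ℕ, μ {ω | ((n : ℝ) + 1)⁻¹ ≤ |X ω s|} = 0 := by
      intro n
      by_contra h0
      obtain ⟨m, hm⟩ := ENNReal.exists_inv_nat_lt h0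
      refine absurd (hs n m) (not_lt.mpr (le_of_lt (lt_of_le_of_lt ?_ hm)))
      exact ENNReal.inv_le_inv.mpr (le_self_add)
    have hsub : {ω | X ω s ≠ 0} ⊆ ⋃ n : ℕ, {ω | ((n : ℝ) + 1)⁻¹ ≤ |X ω s|} := by
      intro ω hω
      have : 0 < |X ω s| := abs_pos.mpr hω
      obtain ⟨n, hn⟩ := exists_nat_one_div_lt this
      refine Set.mem_iUnion.mpr ⟨n, ?_⟩
      rw [one_div] at hn
      exact hn.le
    exact measure_mono_null hsub (measure_iUnion_null_iff.mpr hzero)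
end

section
/- Let S be an arbitrary set. On the Banach space c₀(S) of real-valued functions on S vanishing at infinity with the supremum norm, the σ-algebra generated by the point evaluation maps f ↦ f(s), s ∈ S, equals the σ-algebra generated by all continuous linear functionals on c₀(S). -/
open MeasureTheory Filter Function
open scoped ZeroAtInfty Classical

section Aux

variable {S : Type*} [TopologicalSpace S] [DiscreteTopology S]

/-- A finitely supported function as an element of `C₀(S, ℝ)`. -/
noncomputable def mkFinC0 (g : S → ℝ) (h : (Function.support g).Finite) :
    ZeroAtInftyContinuousMap S ℝ where
  toFun := g
  continuous_toFun := continuous_of_discreteTopology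
  zero_at_infty' := by
    rw [cocompact_eq_cofinite]
    refine Filter.Tendsto.congr' ?_ tendsto_const_nhds
    exact Filter.eventually_cofinite.mpr (by simpa [Function.support, eq_comm] using h)

@[simp] lemma mkFinC0_apply (g : S → ℝ) (h) (t : S) : mkFinC0 g h t = g t := rfl

lemma norm_mkFinC0_le (g : S → ℝ) (h) {C : ℝ} (hC : 0 ≤ C) (hg : ∀ s, |g s| ≤ C) :
    ‖mkFinC0 g h‖ ≤ C := by
  rw [← ZeroAtInftyContinuousMap.norm_toBCF_eq_norm]
  exact (BoundedContinuousFunction.norm_le hC).2 hg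

end Aux

section Aux2

variable {S : Type*} [TopologicalSpace S] [DiscreteTopology S]

/-- Point evaluation as a continuous linear functional on `C₀(S, ℝ)`. -/
noncomputable def evalCLM (s : S) : StrongDual ℝ (ZeroAtInftyContinuousMap S ℝ) :=
  LinearMap.mkContinuous
    { toFun := fun f => f s
      map_add' := fun f g => rfl
      map_smul' := fun c f => rfl } 1
    (fun f => by
      rw [one_mul, ← ZeroAtInftyContinuousMap.norm_toBCF_eq_norm]
      exact BoundedContinuousFunction.norm_coe_le_norm f.toBCF s)

@[simp] lemma evalCLM_apply (s : S) (f : ZeroAtInftyContinuousMap S ℝ) :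
    evalCLM s f = f s := rfl

/-- Kronecker delta in `C₀`. -/
noncomputable def deltaC0 (s : S) : ZeroAtInftyContinuousMap S ℝ :=
  mkFinC0 (fun t => if t = s then 1 else 0)
    (Set.Finite.subset (Set.finite_singleton s) (fun t ht => by
      simp only [Function.mem_support, ne_eq, ite_eq_right_iff, Classical.not_imp] at ht
      simpa using ht.1))

/-- Truncation to a finset, as an element of `C₀`. -/
noncomputable def truncC0 (c : S → ℝ) (F : Finset S) : ZeroAtInftyContinuousMap S ℝ :=
  mkFinC0 (fun t => if t ∈ F then c t else 0)
    (Set.Finite.subset F.finite_toSet (fun t ht => by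
      simp only [Function.mem_support, ne_eq, ite_eq_right_iff, Classical.not_imp] at ht
      exact ht.1))

lemma truncC0_eq_sum (c : S → ℝ) (F : Finset S) :
    truncC0 c F = ∑ s ∈ F, c s • deltaC0 s := by
  ext t
  have hs : (∑ s ∈ F, c s • deltaC0 s) t = ∑ s ∈ F, (c s • deltaC0 s) t :=
    map_sum (evalCLM (S := S) t) (fun s => c s • deltaC0 s) F
  rw [hs]
  simp only [truncC0, deltaC0, mkFinC0_apply, ZeroAtInftyContinuousMap.coe_smul,
    Pi.smul_apply, smul_eq_mul, mul_ite, mul_one, mul_zero]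
  rw [Finset.sum_ite_eq F t c]

lemma apply_truncC0 (x : StrongDual ℝ (ZeroAtInftyContinuousMap S ℝ))
    (c : S → ℝ) (F : Finset S) :
    x (truncC0 c F) = ∑ s ∈ F, c s * x (deltaC0 s) := by
  rw [truncC0_eq_sum, map_sum]
  simp [smul_eq_mul]

end Aux2

section Rep

variable {S : Type*} [TopologicalSpace S] [DiscreteTopology S]
variable (x : StrongDual ℝ (ZeroAtInftyContinuousMap S ℝ))

lemma norm_truncC0_le (c : S → ℝ) (F : Finset S) {C : ℝ} (hC : 0 ≤ C)
    (h : ∀ s, |c s| ≤ C) : ‖truncC0 c F‖ ≤ C := by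
  refine norm_mkFinC0_le _ _ hC (fun s => ?_)
  by_cases hs : s ∈ F <;> simp [hs, h s, hC]

lemma sum_abs_coeff_le (F : Finset S) : ∑ s ∈ F, |x (deltaC0 s)| ≤ ‖x‖ := by
  set c : S → ℝ := fun s => Real.sign (x (deltaC0 s)) with hc
  have h2 : ∀ s, c s * x (deltaC0 s) = |x (deltaC0 s)| := by
    intro s
    rcases lt_trichotomy (x (deltaC0 s)) 0 with h | h | h
    · simp [hc, Real.sign_of_neg h, abs_of_neg h]
    · simp [hc, h]
    · simp [hc, Real.sign_of_pos h, abs_of_pos h]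
  have hcb : ∀ s, |c s| ≤ 1 := by
    intro s
    rcases lt_trichotomy (x (deltaC0 s)) 0 with h | h | h
    · simp [hc, Real.sign_of_neg h]
    · simp [hc, h]
    · simp [hc, Real.sign_of_pos h]
  calc ∑ s ∈ F, |x (deltaC0 s)|
      = x (truncC0 c F) := by
        rw [apply_truncC0]
        exact (Finset.sum_congr rfl fun s _ => (h2 s).symm)
    _ ≤ ‖x (truncC0 c F)‖ := le_abs_self _
    _ ≤ ‖x‖ * ‖truncC0 c F‖ := x.le_opNorm _
    _ ≤ ‖x‖ * 1 := by
        exact mul_le_mul_of_nonneg_left (norm_truncC0_le c F zero_le_one hcb) (norm_nonneg x)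
    _ = ‖x‖ := mul_one _

lemma summable_abs_coeff : Summable (fun s => |x (deltaC0 s)|) :=
  summable_of_sum_le (fun _ => abs_nonneg _) (sum_abs_coeff_le x)

end Rep

section Rep2

variable {S : Type*} [TopologicalSpace S] [DiscreteTopology S]
variable (x : StrongDual ℝ (ZeroAtInftyContinuousMap S ℝ))

lemma finite_large (f : ZeroAtInftyContinuousMap S ℝ) {δ : ℝ} (hδ : 0 < δ) :
    {s | δ ≤ |f s|}.Finite := by
  have h := f.zero_at_infty'
  rw [cocompact_eq_cofinite] at h
  have h2 : ∀ᶠ s in cofinite, dist (f s) 0 < δ := Metric.tendsto_nhds.mp h δ hδ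
  refine (Filter.eventually_cofinite.mp h2).subset (fun s hs => ?_)
  simp only [Set.mem_setOf_eq, Real.dist_eq, sub_zero, not_lt] at *
  exact hs

lemma norm_sub_truncC0_le (f : ZeroAtInftyContinuousMap S ℝ) (F : Finset S) {δ : ℝ}
    (hδ : 0 ≤ δ) (h : ∀ s ∉ F, |f s| ≤ δ) : ‖f - truncC0 (⇑f) F‖ ≤ δ := by
  rw [← ZeroAtInftyContinuousMap.norm_toBCF_eq_norm]
  refine (BoundedContinuousFunction.norm_le hδ).2 (fun s => ?_)
  have : f.toBCF s - (truncC0 (⇑f) F) s = (f - truncC0 (⇑f) F).toBCF s := rfl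
  by_cases hs : s ∈ F
  · have : (f - truncC0 (⇑f) F).toBCF s = f s - f s := by
      rw [← this]; simp [truncC0, hs]
    simp [this, hδ]
  · have : (f - truncC0 (⇑f) F).toBCF s = f s - 0 := by
      rw [← this]; simp [truncC0, hs]
    simpa [this] using h s hs

lemma hasSum_rep (f : ZeroAtInftyContinuousMap S ℝ) :
    HasSum (fun s => x (deltaC0 s) * f s) (x f) := by
  set g : S → ℝ := fun s => x (deltaC0 s) * f s with hg
  have hsummable : Summable g := by
    refine Summable.of_norm ?_
    refine Summable.of_nonneg_of_le (fun s => norm_nonneg _)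
      (fun s => ?_) ((summable_abs_coeff x).mul_right ‖f‖)
    rw [Real.norm_eq_abs, hg, abs_mul]
    refine mul_le_mul_of_nonneg_left ?_ (abs_nonneg _)
    rw [← ZeroAtInftyContinuousMap.norm_toBCF_eq_norm]
    exact BoundedContinuousFunction.norm_coe_le_norm f.toBCF s
  have hL := hsummable.hasSum
  set L := ∑' s, g s with hLdef
  suffices hxf : x f = L by rw [hxf]; exact hL
  refine eq_of_forall_dist_le (fun ε hε => ?_)
  have hhalf : 0 < ε / 2 := half_pos hε
  obtain ⟨F₀, hF₀⟩ := Filter.eventually_atTop.mp (Metric.tendsto_nhds.mp hL (ε / 2) hhalf)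
  set B : ℝ := ‖x‖ + 1 with hB
  have hBpos : 0 < B := by positivity
  set δ : ℝ := ε / (2 * B) with hδdef
  have hδpos : 0 < δ := by positivity
  set G : Finset S := F₀ ∪ (finite_large f hδpos).toFinset with hG
  have h1 : dist (x f) (x (truncC0 (⇑f) G)) ≤ ε / 2 := by
    rw [dist_eq_norm, ← map_sub]
    calc ‖x (f - truncC0 (⇑f) G)‖ ≤ ‖x‖ * ‖f - truncC0 (⇑f) G‖ := x.le_opNorm _
      _ ≤ ‖x‖ * δ := by
          refine mul_le_mul_of_nonneg_left ?_ (norm_nonneg x)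
          refine norm_sub_truncC0_le f G hδpos.le (fun s hs => ?_)
          have : s ∉ (finite_large f hδpos).toFinset := fun h => hs (Finset.mem_union_right _ h)
          rw [Set.Finite.mem_toFinset] at this
          simp only [Set.mem_setOf_eq, not_le] at this
          exact this.le
      _ ≤ B * δ := mul_le_mul_of_nonneg_right (by simp [hB]) hδpos.le
      _ = ε / 2 := by rw [hδdef]; field_simp
  have h2 : x (truncC0 (⇑f) G) = ∑ s ∈ G, g s := by
    rw [apply_truncC0]
    exact Finset.sum_congr rfl (fun s _ => mul_comm _ _)
  have h3 : dist (x (truncC0 (⇑f) G)) L < ε / 2 := by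
    rw [h2]
    exact hF₀ G (Finset.le_iff_subset.mpr Finset.subset_union_left)
  calc dist (x f) L ≤ dist (x f) (x (truncC0 (⇑f) G)) + dist (x (truncC0 (⇑f) G)) L :=
        dist_triangle _ _ _
    _ ≤ ε / 2 + ε / 2 := by linarith
    _ = ε := by ring

end Rep2

/-- On `c₀(S)` (for an arbitrary discrete set `S`), the σ-algebra generated
by the point evaluations equals the σ-algebra generated by all continuous linear
functionals. -/
theorem c0_pointEval_sigmaAlgebra_eq_weak
    {S : Type*} [TopologicalSpace S] [DiscreteTopology S] :
    (⨆ s : S, MeasurableSpace.comap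
        (fun f : ZeroAtInftyContinuousMap S ℝ => f s) (borel ℝ)) =
    (⨆ x : StrongDual ℝ (ZeroAtInftyContinuousMap S ℝ),
        MeasurableSpace.comap (fun f : ZeroAtInftyContinuousMap S ℝ => x f) (borel ℝ)) := by
  classical
  refine le_antisymm (iSup_le fun s => le_iSup_of_le (evalCLM s) le_rfl)
    (iSup_le fun x => ?_)
  set M := (⨆ s : S, MeasurableSpace.comap
      (fun f : ZeroAtInftyContinuousMap S ℝ => f s) (borel ℝ)) with hM
  letI : MeasurableSpace (ZeroAtInftyContinuousMap S ℝ) := M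
  suffices h : Measurable (fun f : ZeroAtInftyContinuousMap S ℝ => x f) by
    intro U hU
    obtain ⟨B, hB, rfl⟩ := hU
    exact h hB
  have heval : ∀ s : S, Measurable (fun f : ZeroAtInftyContinuousMap S ℝ => f s) := by
    intro s
    have hle : MeasurableSpace.comap
        (fun f : ZeroAtInftyContinuousMap S ℝ => f s) (borel ℝ) ≤ M := hM ▸ le_iSup
        (fun s => MeasurableSpace.comap (fun f : ZeroAtInftyContinuousMap S ℝ => f s) (borel ℝ)) s
    exact fun B hB => hle _ ⟨B, hB, rfl⟩
  set a : S → ℝ := fun s => x (deltaC0 s) with ha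
  have hsa : Summable a :=
    Summable.of_norm (by simpa [Real.norm_eq_abs] using summable_abs_coeff x)
  set T := Function.support a with hT
  haveI : Countable T := hsa.countable_support.to_subtype
  have hkey : (fun f : ZeroAtInftyContinuousMap S ℝ => x f)
      = fun f => ∑' s : T, a ↑s * f ↑s := by
    funext f
    rw [← (hasSum_rep x f).tsum_eq]
    refine (tsum_subtype_eq_of_support_subset ?_).symm
    intro s hs
    simp only [Function.mem_support, ne_eq] at hs ⊢
    intro h0
    exact hs (by rw [show x (deltaC0 s) = 0 from h0, zero_mul])
  rw [hkey]
  refine measurable_of_tendsto_metrizable' (atTop : Filter (Finset T))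
    (fun F => Finset.measurable_sum F (fun s _ => (heval ↑s).const_mul (a ↑s))) ?_
  rw [tendsto_pi_nhds]
  intro f
  exact ((hasSum_rep x f).summable.subtype T).hasSum
end

section
/- Let H be a separable real Hilbert space with orthonormal (Hilbert) basis (e_n)_{n∈ℕ}, let A be an index set, and for each α ∈ A let X_α be a Borel measurable H-valued random variable on a probability space (Ω_α, F_α, P_α). Suppose there is a summable sequence λ_n ≥ 0 such that for every α ∈ A and every y ∈ H the random variable ⟨y, X_α⟩² is integrable with E⟨y, X_α⟩² ≤ ∑_{n=0}^∞ λ_n ⟨y, e_n⟩². Then the family {X_α : α ∈ A} is tight: for every ε > 0 there exists a compact set K ⊆ H such that P_α(X_α ∈ K) ≥ 1 − ε for all α ∈ A. -/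
open MeasureTheory
open scoped BigOperators


open Metric Filter
open scoped ENNReal

set_option linter.unusedSectionVars false
set_option maxHeartbeats 1000000

section Aux


variable {H : Type*} [NormedAddCommGroup H] [InnerProductSpace ℝ H] [CompleteSpace H]

lemma parseval' (e : HilbertBasis ℕ ℝ H) (x : H) :
    HasSum (fun n => (inner ℝ (e n) x : ℝ) ^ 2) (‖x‖ ^ 2) := by
  have h := e.hasSum_inner_mul_inner x x
  simp only [real_inner_self_eq_norm_sq] at h
  suffices hf : (fun n => (inner ℝ (e n) x : ℝ) ^ 2) = fun i => inner ℝ x (e i) * inner ℝ (e i) x by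
    rw [hf]; exact h
  funext n
  rw [real_inner_comm]
  ring

lemma tail_eq' (e : HilbertBasis ℕ ℝ H) (M : ℕ) (x : H) :
    ‖x‖ ^ 2 - ∑ n ∈ Finset.range M, (inner ℝ (e n) x : ℝ) ^ 2
      = ∑' n, (inner ℝ (e (n + M)) x : ℝ) ^ 2 := by
  have h := parseval' e x
  have := Summable.sum_add_tsum_nat_add (f := fun n => (inner ℝ (e n) x : ℝ) ^ 2) M h.summable
  rw [h.tsum_eq] at this
  linarith

lemma proj_dist' (e : HilbertBasis ℕ ℝ H) (M : ℕ) (x : H) :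
    ‖x - ∑ i ∈ Finset.range M, (inner ℝ (e i) x : ℝ) • e i‖ ^ 2
      = ∑' n, (inner ℝ (e (n + M)) x : ℝ) ^ 2 := by
  set P : H := ∑ i ∈ Finset.range M, (inner ℝ (e i) x : ℝ) • e i with hP
  have horth := orthonormal_iff_ite.mp e.orthonormal
  have hinner : ∀ n, (inner ℝ (e n) (x - P) : ℝ)
      = if n < M then 0 else (inner ℝ (e n) x : ℝ) := by
    intro n
    rw [inner_sub_right, hP, inner_sum]
    simp only [real_inner_smul_right]
    have hterm : ∀ i ∈ Finset.range M, (inner ℝ (e i) x : ℝ) * (inner ℝ (e n) (e i) : ℝ)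
        = if i = n then (inner ℝ (e n) x : ℝ) else 0 := by
      intro i _
      rw [horth n i]
      rcases eq_or_ne i n with rfl | hne
      · simp
      · simp [hne, (Ne.symm hne)]
    rw [Finset.sum_congr rfl hterm, Finset.sum_ite_eq' (Finset.range M) n]
    by_cases h : n < M <;> simp [h, Finset.mem_range]
  have h1 := parseval' e (x - P)
  have h2 : (fun n => (inner ℝ (e n) (x - P) : ℝ) ^ 2)
      = fun n => if n < M then 0 else (inner ℝ (e n) x : ℝ) ^ 2 := by
    funext n; rw [hinner n]; by_cases h : n < M <;> simp [h]
  rw [h2] at h1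
  have := Summable.sum_add_tsum_nat_add
    (f := fun n => if n < M then (0:ℝ) else (inner ℝ (e n) x : ℝ) ^ 2) M h1.summable
  rw [h1.tsum_eq] at this
  have hz : ∑ n ∈ Finset.range M, (if n < M then (0:ℝ) else (inner ℝ (e n) x : ℝ) ^ 2) = 0 := by
    apply Finset.sum_eq_zero; intro n hn; simp [Finset.mem_range.mp hn]
  have ht : (fun n => if n + M < M then (0:ℝ) else (inner ℝ (e (n + M)) x : ℝ) ^ 2)
      = fun n => (inner ℝ (e (n + M)) x : ℝ) ^ 2 := by
    funext n; simp [Nat.not_lt.mpr (Nat.le_add_left M n)]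
  rw [hz, ht] at this
  linarith

lemma compact_K' (e : HilbertBasis ℕ ℝ H) (c : ℕ → ℝ) (m : ℕ → ℕ) (hm0 : m 0 = 0)
    (hc : ∀ δ : ℝ, 0 < δ → ∃ k, c k < δ) :
    IsCompact {x : H | ∀ k, ∑' n, (inner ℝ (e (n + m k)) x : ℝ) ^ 2 ≤ c k} := by
  set K : Set H := {x : H | ∀ k, ∑' n, (inner ℝ (e (n + m k)) x : ℝ) ^ 2 ≤ c k} with hK
  have hKeq : K = ⋂ k, (fun x : H => ‖x‖ ^ 2
      - ∑ n ∈ Finset.range (m k), (inner ℝ (e n) x : ℝ) ^ 2) ⁻¹' Set.Iic (c k) := by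
    ext x
    simp only [hK, Set.mem_setOf_eq, Set.mem_iInter, Set.mem_preimage, Set.mem_Iic]
    constructor <;> intro h k <;> [rw [tail_eq']; rw [← tail_eq']] <;> exact h k
  have hclosed : IsClosed K := by
    rw [hKeq]
    refine isClosed_iInter fun k => IsClosed.preimage ?_ isClosed_Iic
    exact ((continuous_norm.pow 2).sub (continuous_finset_sum _ fun i _ =>
      ((continuous_const.inner continuous_id).pow 2)))
  have hR : ∀ x ∈ K, ‖x‖ ^ 2 ≤ c 0 := by
    intro x hx
    have := hx 0
    rw [hm0] at this
    have h0 := tail_eq' e 0 x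
    simp only [Finset.range_zero, Finset.sum_empty, sub_zero] at h0
    rw [← h0] at this
    exact this
  set R : ℝ := Real.sqrt (c 0) with hRdef
  have hxR : ∀ x ∈ K, ‖x‖ ≤ R := by
    intro x hx
    rw [hRdef, ← Real.sqrt_sq (norm_nonneg x)]
    exact Real.sqrt_le_sqrt (hR x hx)
  apply TotallyBounded.isCompact_of_isClosed _ hclosed
  rw [Metric.totallyBounded_iff]
  intro δ hδ
  obtain ⟨k, hk⟩ := hc ((δ / 2) ^ 2) (by positivity)
  set M := m k with hM
  set L : (Fin M → ℝ) → H := fun v => ∑ i : Fin M, v i • e (i : ℕ) with hL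
  have hLcont : Continuous L :=
    continuous_finset_sum _ fun i _ => (continuous_apply i).smul continuous_const
  have hCcomp : IsCompact (L '' closedBall 0 R) :=
    (isCompact_closedBall _ _).image hLcont
  obtain ⟨t, htfin, hcov⟩ := Metric.totallyBounded_iff.mp hCcomp.totallyBounded (δ / 2)
    (by positivity)
  refine ⟨t, htfin, fun x hx => ?_⟩
  set P : H := ∑ i ∈ Finset.range M, (inner ℝ (e i) x : ℝ) • e i with hP
  have hPC : P ∈ L '' closedBall 0 R := by
    refine ⟨fun i => (inner ℝ (e (i : ℕ)) x : ℝ), ?_, ?_⟩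
    · rw [mem_closedBall, dist_zero_right]
      refine (pi_norm_le_iff_of_nonneg (by positivity)).mpr fun i => ?_
      calc ‖(inner ℝ (e (i : ℕ)) x : ℝ)‖ ≤ ‖e (i : ℕ)‖ * ‖x‖ := norm_inner_le_norm _ _
        _ = ‖x‖ := by rw [e.orthonormal.1 (i : ℕ), one_mul]
        _ ≤ R := hxR x hx
    · rw [hL, hP]
      exact (Finset.sum_range fun i => (inner ℝ (e i) x : ℝ) • e i).symm
  have hxP : dist x P < δ / 2 := by
    rw [dist_eq_norm]
    have h2 : ‖x - P‖ ^ 2 < (δ / 2) ^ 2 := by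
      rw [hP, proj_dist' e M x]
      exact lt_of_le_of_lt (hx k) hk
    exact lt_of_pow_lt_pow_left₀ 2 (by positivity) h2
  obtain ⟨y, hyt, hy⟩ := Set.mem_iUnion₂.mp (hcov hPC)
  refine Set.mem_iUnion₂.mpr ⟨y, hyt, ?_⟩
  rw [mem_ball] at *
  calc dist x y ≤ dist x P + dist P y := dist_triangle _ _ _
    _ < δ / 2 + δ / 2 := add_lt_add hxP hy
    _ = δ := by ring

end Aux

/-- Let `H` be a separable Hilbert space with Hilbert basis `(e_n)`, and let
`(X_α)` be a family of Borel measurable `H`-valued random variables whose second moment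
forms are uniformly dominated by a positive trace class operator `∑ λ_n e_n ⊗ e_n`
(`λ_n ≥ 0` summable). Then the family `(X_α)` is tight. -/
theorem hilbert_dominated_second_moments_tight
    {H : Type*} [NormedAddCommGroup H] [InnerProductSpace ℝ H] [CompleteSpace H]
    [SecondCountableTopology H] [MeasurableSpace H] [BorelSpace H]
    (e : HilbertBasis ℕ ℝ H)
    {A : Type*} (Ω : A → Type*) [∀ a, MeasurableSpace (Ω a)]
    (μ : ∀ a, Measure (Ω a)) [∀ a, IsProbabilityMeasure (μ a)]
    (X : ∀ a, Ω a → H) (hX : ∀ a, Measurable (X a))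
    (lam : ℕ → ℝ) (hlam0 : ∀ n, 0 ≤ lam n) (hlam : Summable lam)
    (hmom : ∀ (a : A) (y : H),
      Integrable (fun ω => (inner ℝ y (X a ω) : ℝ) ^ 2) (μ a) ∧
      ∫ ω, (inner ℝ y (X a ω) : ℝ) ^ 2 ∂(μ a) ≤ ∑' n, lam n * (inner ℝ y (e n) : ℝ) ^ 2) :
    ∀ ε : ℝ, 0 < ε → ∃ K : Set H, IsCompact K ∧
      ∀ a : A, 1 - ε ≤ ((μ a) (X a ⁻¹' K)).toReal := by
  intro ε hε
  have horth := orthonormal_iff_ite.mp e.orthonormal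
  -- per-coordinate second moment bound
  have hcoord : ∀ (a : A) (n : ℕ),
      ∫ ω, (inner ℝ (e n) (X a ω) : ℝ) ^ 2 ∂(μ a) ≤ lam n := by
    intro a n
    have h := (hmom a (e n)).2
    have hts : ∑' j, lam j * (inner ℝ (e n) (e j) : ℝ) ^ 2 = lam n := by
      rw [tsum_eq_single n]
      · rw [horth n n]; simp
      · intro j hj
        rw [horth n j]
        simp [Ne.symm hj]
    rwa [hts] at h
  -- tail of the trace
  set T : ℕ → ℝ := fun M => ∑' n, lam (n + M) with hT
  have hT0 : ∀ M, 0 ≤ T M := fun M => tsum_nonneg fun n => hlam0 _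
  have hTtend : Tendsto T atTop (nhds 0) := by
    have := tendsto_sum_nat_add (f := lam)
    exact this
  set S : ℝ := ∑' n, lam n with hS
  have hS0 : 0 ≤ S := tsum_nonneg fun n => hlam0 n
  -- the constants
  set c : ℕ → ℝ := fun k => if k = 0 then 2 * S / ε + 1 else 1 / k with hc
  have hcpos : ∀ k, 0 < c k := by
    intro k
    rcases Nat.eq_zero_or_pos k with rfl | hk
    · simp only [hc, if_pos rfl]; positivity
    · simp only [hc, if_neg (Nat.pos_iff_ne_zero.mp hk)]
      positivity
  have hcsmall : ∀ δ : ℝ, 0 < δ → ∃ k, c k < δ := by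
    intro δ hδ
    obtain ⟨n, hn⟩ := exists_nat_one_div_lt (K := ℝ) hδ
    refine ⟨n + 1, ?_⟩
    simp only [hc, if_neg (Nat.succ_ne_zero n)]
    rw [Nat.cast_add, Nat.cast_one]
    exact hn
  -- choose the cutoffs
  have hmex : ∀ k : ℕ, ∃ M : ℕ, (k = 0 → M = 0) ∧ T M ≤ ε / 2 ^ (k + 1) * c k := by
    intro k
    rcases Nat.eq_zero_or_pos k with rfl | hk
    · refine ⟨0, fun _ => rfl, ?_⟩
      have hT00 : T 0 = S := by simp [hT, hS]
      rw [hT00]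
      simp only [hc, if_pos rfl]
      rw [pow_one]
      rw [div_mul_eq_mul_div, le_div_iff₀ (by norm_num : (0:ℝ) < 2)]
      have : ε * (2 * S / ε) = 2 * S := by field_simp
      nlinarith [mul_pos hε (hcpos 0)]
    · have hb : (0:ℝ) < ε / 2 ^ (k + 1) * c k := by positivity
      have := (hTtend.eventually (eventually_le_nhds hb)).exists
      obtain ⟨M, hM⟩ := this
      exact ⟨M, fun h => absurd h (Nat.pos_iff_ne_zero.mp hk), hM⟩
  choose m hm0 hmT using hmex
  -- the compact set
  set K : Set H := {x : H | ∀ k, ∑' n, (inner ℝ (e (n + m k)) x : ℝ) ^ 2 ≤ c k} with hK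
  refine ⟨K, compact_K' e c m (hm0 0 rfl) hcsmall, fun a => ?_⟩
  -- measurability facts
  have hinnermeas : ∀ n : ℕ, Measurable fun ω => (inner ℝ (e n) (X a ω) : ℝ) ^ 2 :=
    fun n => ((Continuous.measurable (continuous_const.inner continuous_id)).comp (hX a)).pow_const 2
  -- lintegral bound per coordinate
  have hlint : ∀ n : ℕ,
      ∫⁻ ω, ENNReal.ofReal ((inner ℝ (e n) (X a ω) : ℝ) ^ 2) ∂(μ a) ≤ ENNReal.ofReal (lam n) := by
    intro n
    rw [← ofReal_integral_eq_lintegral_ofReal (hmom a (e n)).1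
      (Filter.Eventually.of_forall fun ω => sq_nonneg _)]
    exact ENNReal.ofReal_le_ofReal (hcoord a n)
  -- tail lintegral bound
  have htail : ∀ M : ℕ,
      ∫⁻ ω, ENNReal.ofReal (∑' n, (inner ℝ (e (n + M)) (X a ω) : ℝ) ^ 2) ∂(μ a)
        ≤ ENNReal.ofReal (T M) := by
    intro M
    have hpt : ∀ ω, ENNReal.ofReal (∑' n, (inner ℝ (e (n + M)) (X a ω) : ℝ) ^ 2)
        = ∑' n, ENNReal.ofReal ((inner ℝ (e (n + M)) (X a ω) : ℝ) ^ 2) := by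
      intro ω
      refine ENNReal.ofReal_tsum_of_nonneg (fun n => sq_nonneg _) ?_
      exact ((summable_nat_add_iff M).mpr (parseval' e (X a ω)).summable)
    calc ∫⁻ ω, ENNReal.ofReal (∑' n, (inner ℝ (e (n + M)) (X a ω) : ℝ) ^ 2) ∂(μ a)
        = ∫⁻ ω, ∑' n, ENNReal.ofReal ((inner ℝ (e (n + M)) (X a ω) : ℝ) ^ 2) ∂(μ a) := by
          simp_rw [hpt]
      _ = ∑' n, ∫⁻ ω, ENNReal.ofReal ((inner ℝ (e (n + M)) (X a ω) : ℝ) ^ 2) ∂(μ a) :=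
          lintegral_tsum fun n => ((hinnermeas (n + M)).ennreal_ofReal).aemeasurable
      _ ≤ ∑' n, ENNReal.ofReal (lam (n + M)) := ENNReal.tsum_le_tsum fun n => hlint (n + M)
      _ = ENNReal.ofReal (T M) := by
          rw [hT, ENNReal.ofReal_tsum_of_nonneg (fun n => hlam0 _)
            ((summable_nat_add_iff M).mpr hlam)]
  -- Markov per k
  have hmarkov : ∀ k : ℕ,
      (μ a) {ω | ¬ (∑' n, (inner ℝ (e (n + m k)) (X a ω) : ℝ) ^ 2 ≤ c k)}
        ≤ ENNReal.ofReal (ε / 2 ^ (k + 1)) := by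
    intro k
    set f : Ω a → ℝ≥0∞ :=
      fun ω => ENNReal.ofReal (∑' n, (inner ℝ (e (n + m k)) (X a ω) : ℝ) ^ 2) with hf
    have hfmeas : Measurable f := by
      have hcont : Continuous fun x : H => ∑' n, (inner ℝ (e (n + m k)) x : ℝ) ^ 2 := by
        have : (fun x : H => ∑' n, (inner ℝ (e (n + m k)) x : ℝ) ^ 2)
            = fun x : H => ‖x‖ ^ 2 - ∑ n ∈ Finset.range (m k), (inner ℝ (e n) x : ℝ) ^ 2 := by
          funext x; rw [tail_eq']
        rw [this]
        exact (continuous_norm.pow 2).sub (continuous_finset_sum _ fun i _ =>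
          ((continuous_const.inner continuous_id).pow 2))
      exact ((hcont.measurable).comp (hX a)).ennreal_ofReal
    have hsub : {ω | ¬ (∑' n, (inner ℝ (e (n + m k)) (X a ω) : ℝ) ^ 2 ≤ c k)}
        ⊆ {ω | ENNReal.ofReal (c k) ≤ f ω} := by
      intro ω hω
      simp only [Set.mem_setOf_eq, not_le] at hω
      exact ENNReal.ofReal_le_ofReal hω.le
    calc (μ a) {ω | ¬ (∑' n, (inner ℝ (e (n + m k)) (X a ω) : ℝ) ^ 2 ≤ c k)}
        ≤ (μ a) {ω | ENNReal.ofReal (c k) ≤ f ω} := measure_mono hsub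
      _ ≤ (∫⁻ ω, f ω ∂(μ a)) / ENNReal.ofReal (c k) :=
          meas_ge_le_lintegral_div hfmeas.aemeasurable
            (ENNReal.ofReal_pos.mpr (hcpos k)).ne' ENNReal.ofReal_ne_top
      _ ≤ ENNReal.ofReal (T (m k)) / ENNReal.ofReal (c k) :=
          ENNReal.div_le_div_right (htail (m k)) _
      _ = ENNReal.ofReal (T (m k) / c k) := (ENNReal.ofReal_div_of_pos (hcpos k)).symm
      _ ≤ ENNReal.ofReal (ε / 2 ^ (k + 1)) := by
          apply ENNReal.ofReal_le_ofReal
          rw [div_le_iff₀ (hcpos k)]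
          exact hmT k
  -- sum the bounds
  have hcompl : (μ a) ((X a ⁻¹' K)ᶜ) ≤ ENNReal.ofReal ε := by
    have hUnion : (X a ⁻¹' K)ᶜ
        = ⋃ k, {ω | ¬ (∑' n, (inner ℝ (e (n + m k)) (X a ω) : ℝ) ^ 2 ≤ c k)} := by
      ext ω
      simp only [Set.mem_compl_iff, Set.mem_preimage, hK, Set.mem_setOf_eq, not_forall,
        Set.mem_iUnion]
    calc (μ a) ((X a ⁻¹' K)ᶜ) ≤ ∑' k, (μ a) {ω | ¬ (∑' n, (inner ℝ (e (n + m k)) (X a ω) : ℝ) ^ 2 ≤ c k)} := by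
          rw [hUnion]; exact measure_iUnion_le _
      _ ≤ ∑' k : ℕ, ENNReal.ofReal (ε / 2 ^ (k + 1)) := ENNReal.tsum_le_tsum hmarkov
      _ = ENNReal.ofReal ε := by
          have h1 : ∀ k : ℕ, ENNReal.ofReal (ε / 2 ^ (k + 1))
              = ENNReal.ofReal ε * (2 : ℝ≥0∞)⁻¹ ^ (k + 1) := by
            intro k
            rw [div_eq_mul_inv, ENNReal.ofReal_mul hε.le, ← ENNReal.inv_pow]
            congr 1
            rw [ENNReal.ofReal_inv_of_pos (by positivity),
              ENNReal.ofReal_pow (by norm_num : (0:ℝ) ≤ 2)]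
            norm_num
          simp_rw [h1]
          rw [ENNReal.tsum_mul_left, ENNReal.tsum_geometric_add_one, ENNReal.one_sub_inv_two,
            ENNReal.mul_inv_cancel (by norm_num) (by norm_num), mul_one]
  -- conclude
  have hKmeas : MeasurableSet (X a ⁻¹' K) :=
    (hX a) ((compact_K' e c m (hm0 0 rfl) hcsmall).isClosed.measurableSet)
  have hsplit : (μ a) (X a ⁻¹' K) + (μ a) ((X a ⁻¹' K)ᶜ) = 1 := by
    rw [measure_add_measure_compl hKmeas, measure_univ]
  have hne1 : (μ a) (X a ⁻¹' K) ≠ ⊤ := measure_ne_top _ _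
  have hne2 : (μ a) ((X a ⁻¹' K)ᶜ) ≠ ⊤ := measure_ne_top _ _
  have htR : ((μ a) (X a ⁻¹' K)).toReal + ((μ a) ((X a ⁻¹' K)ᶜ)).toReal = 1 := by
    rw [← ENNReal.toReal_add hne1 hne2, hsplit]
    simp
  have hcomplR : ((μ a) ((X a ⁻¹' K)ᶜ)).toReal ≤ ε :=
    ENNReal.toReal_le_of_le_ofReal hε.le hcompl
  linarith
end

section
/- Let H be a real Hilbert space (not necessarily separable) and let X be an H-valued random variable on a probability space that is weakly measurable, i.e., ω ↦ ⟨y, X(ω)⟩ is measurable for every y ∈ H. Then X is weakly a.s. separably valued: there exists a separable closed subspace M ⊆ H such that for every y ∈ H orthogonal to M (i.e., ⟨y, m⟩ = 0 for all m ∈ M), one has ⟨y, X(ω)⟩ = 0 for almost every ω. -/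
open MeasureTheory Submodule Filter Topology

set_option linter.unusedSectionVars false
section aux
variable {H : Type*} [NormedAddCommGroup H] [InnerProductSpace ℝ H] [CompleteSpace H]

/-- closed span of a set -/
noncomputable def Msp (t : Set H) : Submodule ℝ H := (Submodule.span ℝ t).topologicalClosure

lemma Msp_isClosed (t : Set H) : IsClosed (Msp t : Set H) :=
  Submodule.isClosed_topologicalClosure _

instance Msp_complete (t : Set H) : CompleteSpace (Msp t) :=
  (Msp_isClosed t).completeSpace_coe

lemma Msp_separable {t : Set H} (ht : t.Countable) :
    TopologicalSpace.IsSeparable (Msp t : Set H) := by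
  have h := (ht.isSeparable.span (R := ℝ)).closure
  rwa [Msp, Submodule.topologicalClosure_coe]

lemma Msp_mono {t t' : Set H} (h : t ⊆ t') : Msp t ≤ Msp t' :=
  Submodule.topologicalClosure_mono (Submodule.span_mono h)

lemma mem_Msp {t : Set H} {x : H} (hx : x ∈ t) : x ∈ Msp t :=
  Submodule.le_topologicalClosure _ (Submodule.subset_span hx)

lemma aux_inner (K : Submodule ℝ H) [HasOrthogonalProjection K] {v : H} (hv : v ∈ K) (x : H) :
    (inner ℝ v x : ℝ) = inner ℝ v ((orthogonalProjection K x : H)) := by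
  have h := K.starProjection_inner_eq_zero x v hv
  have h2 : (inner ℝ v (x - orthogonalProjection K x) : ℝ) = 0 := by
    rw [real_inner_comm]; exact h
  rw [inner_sub_right, sub_eq_zero] at h2
  exact h2

lemma norm_proj_mono {K K' : Submodule ℝ H} [HasOrthogonalProjection K]
    [HasOrthogonalProjection K'] (h : K ≤ K') (x : H) :
    ‖(orthogonalProjection K x : H)‖ ≤ ‖(orthogonalProjection K' x : H)‖ := by
  set p : H := (orthogonalProjection K x : H) with hp
  set q : H := (orthogonalProjection K' x : H) with hq
  have hpK : p ∈ K := SetLike.coe_mem _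
  have h1 : (inner ℝ p x : ℝ) = inner ℝ p q := aux_inner K' (h hpK) x
  have h2 : (inner ℝ p x : ℝ) = ‖p‖ ^ 2 := by
    rw [aux_inner K hpK x, ← hp, real_inner_self_eq_norm_sq]
  have h3 := real_inner_le_norm p q
  nlinarith [norm_nonneg p, norm_nonneg q]

lemma key_ineq (T : Set H) (y : H) (hy : ‖y‖ = 1)
    (hyT : ∀ m ∈ Msp T, (inner ℝ y m : ℝ) = 0) (x : H) :
    ‖(orthogonalProjection (Msp T) x : H)‖ ^ 2 + (inner ℝ y x : ℝ) ^ 2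
      ≤ ‖(orthogonalProjection (Msp (T ∪ {y})) x : H)‖ ^ 2 := by
  set p : H := (orthogonalProjection (Msp T) x : H) with hp
  set c : ℝ := (inner ℝ y x : ℝ) with hc
  set q : H := (orthogonalProjection (Msp (T ∪ {y})) x : H) with hq
  have hpT : p ∈ Msp T := SetLike.coe_mem _
  have hpM' : p ∈ Msp (T ∪ {y}) := Msp_mono Set.subset_union_left hpT
  have hyM' : y ∈ Msp (T ∪ {y}) := mem_Msp (Set.mem_union_right _ rfl)
  have hyp : (inner ℝ y p : ℝ) = 0 := hyT p hpT
  set w : H := p + c • y with hw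
  have hwM' : w ∈ Msp (T ∪ {y}) :=
    Submodule.add_mem _ hpM' (Submodule.smul_mem _ _ hyM')
  have hpx : (inner ℝ p x : ℝ) = ‖p‖ ^ 2 := by
    rw [aux_inner (Msp T) hpT x, ← hp, real_inner_self_eq_norm_sq]
  have hwx : (inner ℝ w x : ℝ) = ‖p‖ ^ 2 + c ^ 2 := by
    rw [hw, inner_add_left, real_inner_smul_left, hpx, ← hc]; ring
  have hww : ‖w‖ ^ 2 = ‖p‖ ^ 2 + c ^ 2 := by
    have hpy : (inner ℝ p (c • y) : ℝ) = 0 := by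
      rw [real_inner_smul_right, real_inner_comm, hyp, mul_zero]
    rw [hw, norm_add_sq_real, hpy, norm_smul, hy]
    simp [abs_mul_abs_self]
  have h1 : (inner ℝ w x : ℝ) = inner ℝ w q := aux_inner _ hwM' x
  have h2 := real_inner_le_norm w q
  nlinarith [norm_nonneg w, norm_nonneg q, sq_nonneg (‖w‖ - ‖q‖)]

lemma meas_norm_proj {Ω : Type*} [MeasurableSpace Ω] (X : Ω → H)
    (hX : ∀ y : H, Measurable fun ω => (inner ℝ y (X ω) : ℝ)) {t : Set H} (ht : t.Countable) :
    Measurable fun ω => ‖(orthogonalProjection (Msp t) (X ω) : H)‖ := by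
  obtain ⟨c, hc, hsub⟩ := Msp_separable (H := H) ht
  haveI := hc.to_subtype
  set u : H → H := fun d =>
    ‖(orthogonalProjection (Msp t) d : H)‖⁻¹ • (orthogonalProjection (Msp t) d : H) with hu
  have humem : ∀ d, u d ∈ Msp t := fun d => Submodule.smul_mem _ _ (SetLike.coe_mem _)
  have hun : ∀ d, ‖u d‖ ≤ 1 := by
    intro d
    rcases eq_or_ne ((orthogonalProjection (Msp t) d : H)) 0 with h0 | h0
    · simp only [hu, h0, smul_zero, norm_zero, zero_le_one]
    · rw [hu]
      exact le_of_eq (norm_smul_inv_norm h0)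
  have hkey : ∀ x : H, (⨆ d : c, ENNReal.ofReal (inner ℝ (u d) x : ℝ))
      = ENNReal.ofReal ‖(orthogonalProjection (Msp t) x : H)‖ := by
    intro x
    set p : H := (orthogonalProjection (Msp t) x : H) with hp
    apply le_antisymm
    · refine iSup_le fun d => ENNReal.ofReal_le_ofReal ?_
      have h1 : (inner ℝ (u d) x : ℝ) = inner ℝ (u d) p := aux_inner _ (humem d) x
      have h2 := real_inner_le_norm (u d : H) p
      calc (inner ℝ (u d) x : ℝ) = inner ℝ (u d : H) p := h1
        _ ≤ ‖(u d : H)‖ * ‖p‖ := h2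
        _ ≤ 1 * ‖p‖ := mul_le_mul_of_nonneg_right (hun d) (norm_nonneg p)
        _ = ‖p‖ := one_mul _
    · rcases eq_or_ne p 0 with h0 | h0
      · simp [h0]
      · have hpmem : p ∈ Msp t := SetLike.coe_mem _
        have hpc : p ∈ closure c := hsub hpmem
        obtain ⟨d, hdc, hdlim⟩ := mem_closure_iff_seq_limit.mp hpc
        have hPp : ((orthogonalProjection (Msp t) p : H)) = p :=
          starProjection_eq_self_iff.mpr hpmem
        have hP : Continuous fun z : H => ((orthogonalProjection (Msp t) z : H)) :=
          continuous_subtype_val.comp (orthogonalProjection (Msp t)).continuous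
        have hinv : ContinuousAt
            (fun z : H => ‖((orthogonalProjection (Msp t) z : H))‖⁻¹) p := by
          apply (hP.norm.continuousAt).inv₀
          rw [hPp]
          simpa using h0
        have hucont : ContinuousAt u p := hinv.smul hP.continuousAt
        have hcont : ContinuousAt (fun z : H => (inner ℝ (u z) x : ℝ)) p :=
          hucont.inner continuousAt_const
        have hval : (inner ℝ (u p) x : ℝ) = ‖p‖ := by
          have hup : u p = ‖p‖⁻¹ • p := by rw [hu]; simp [hPp]
          have hpx : (inner ℝ p x : ℝ) = ‖p‖ ^ 2 := by
            rw [aux_inner (Msp t) hpmem x, ← hp, real_inner_self_eq_norm_sq]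
          rw [hup, real_inner_smul_left, hpx]
          have hn : ‖p‖ ≠ 0 := norm_ne_zero_iff.mpr h0
          field_simp
        have htend : Filter.Tendsto (fun n => ENNReal.ofReal (inner ℝ (u (d n)) x : ℝ))
            Filter.atTop (𝓝 (ENNReal.ofReal ‖p‖)) := by
          rw [← hval]
          exact (ENNReal.continuous_ofReal.tendsto _).comp (hcont.tendsto.comp hdlim)
        refine le_of_tendsto htend (Filter.Eventually.of_forall fun n => ?_)
        exact le_iSup_of_le (⟨d n, hdc n⟩ : c) le_rfl
  have heq : (fun ω => ‖(orthogonalProjection (Msp t) (X ω) : H)‖)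
      = fun ω => (⨆ d : c, ENNReal.ofReal (inner ℝ (u d) (X ω) : ℝ)).toReal := by
    funext ω
    rw [hkey, ENNReal.toReal_ofReal (norm_nonneg _)]
  rw [heq]
  exact (Measurable.iSup fun d : c => (hX (u d)).ennreal_ofReal).ennreal_toReal

lemma psi_le_one {a : ℝ} (ha : 0 ≤ a) : a / (1 + a) ≤ 1 := by
  rw [div_le_one (by linarith)]; linarith

lemma psi_mono {a b : ℝ} (ha : 0 ≤ a) (hab : a ≤ b) : a / (1 + a) ≤ b / (1 + b) := by
  rw [div_le_div_iff₀ (by linarith) (by linarith)]; nlinarith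

lemma psi_strict {a b : ℝ} (ha : 0 ≤ a) (hab : a < b) : a / (1 + a) < b / (1 + b) := by
  rw [div_lt_div_iff₀ (by linarith) (by linarith)]; nlinarith

end aux

open scoped ENNReal



/-- Every weakly measurable random variable in a (not necessarily separable)
Hilbert space is weakly a.s. separably valued: there is a closed separable subspace `M` such
that every vector orthogonal to `M` pairs to `0` with `X` almost surely. -/
theorem hilbert_weakly_measurable_weakly_ae_separably_valued
    {H : Type*} [NormedAddCommGroup H] [InnerProductSpace ℝ H] [CompleteSpace H]
    {Ω : Type*} [MeasurableSpace Ω] {μ : Measure Ω} [IsProbabilityMeasure μ]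
    (X : Ω → H) (hX : ∀ y : H, Measurable fun ω => (inner ℝ y (X ω) : ℝ)) :
    ∃ M : Submodule ℝ H, IsClosed (M : Set H) ∧
      TopologicalSpace.IsSeparable (M : Set H) ∧
      ∀ y : H, (∀ m ∈ M, (inner ℝ y m : ℝ) = 0) →
        ∀ᵐ ω ∂μ, (inner ℝ y (X ω) : ℝ) = 0 := by
  classical
  set Φ : Set H → ℝ≥0∞ := fun s => ∫⁻ ω, ENNReal.ofReal
      (‖(orthogonalProjection (Msp s) (X ω) : H)‖ /
        (1 + ‖(orthogonalProjection (Msp s) (X ω) : H)‖)) ∂μ with hΦ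
  have hΦ_le_one : ∀ s : Set H, Φ s ≤ 1 := by
    intro s
    calc Φ s ≤ ∫⁻ _, 1 ∂μ :=
          lintegral_mono fun ω => ENNReal.ofReal_le_one.mpr (psi_le_one (norm_nonneg _))
      _ = 1 := by simp
  set α : ℝ≥0∞ := ⨆ s : {s : Set H // s.Countable}, Φ s.1 with hα
  have hαle : α ≤ 1 := iSup_le fun s => hΦ_le_one s.1
  have hαne : α ≠ ⊤ := (hαle.trans_lt ENNReal.one_lt_top).ne
  have hseq : ∀ n : ℕ, ∃ s : Set H, s.Countable ∧ α - (n : ℝ≥0∞)⁻¹ ≤ Φ s := by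
    intro n
    rcases eq_or_ne (α - (n : ℝ≥0∞)⁻¹) 0 with h0 | h0
    · exact ⟨∅, Set.countable_empty, by rw [h0]; exact zero_le⟩
    · have hα0 : α ≠ 0 := by
        intro h
        rw [h, zero_tsub] at h0
        exact h0 rfl
      have hn0 : ((n : ℝ≥0∞))⁻¹ ≠ 0 := by
        simp [ENNReal.inv_eq_zero]
      have hlt : α - (n : ℝ≥0∞)⁻¹ < α := ENNReal.sub_lt_self hαne hα0 hn0
      obtain ⟨s, hs⟩ := lt_iSup_iff.mp hlt
      exact ⟨s.1, s.2, hs.le⟩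
  choose ts hts hΦts using hseq
  set T : Set H := ⋃ n, ts n with hT
  have hTc : T.Countable := Set.countable_iUnion hts
  have hmono : ∀ s s' : Set H, s ⊆ s' → Φ s ≤ Φ s' := by
    intro s s' hss
    exact lintegral_mono fun ω => ENNReal.ofReal_le_ofReal
      (psi_mono (norm_nonneg _) (norm_proj_mono (Msp_mono hss) _))
  have hΦT_ge : ∀ n : ℕ, α - (n : ℝ≥0∞)⁻¹ ≤ Φ T := fun n =>
    (hΦts n).trans (hmono _ _ (Set.subset_iUnion ts n))
  have hΦTα : α ≤ Φ T := by
    by_contra hlt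
    push_neg at hlt
    have hd : α - Φ T ≠ 0 := by
      intro h
      rw [tsub_eq_zero_iff_le] at h
      exact absurd (h.trans_lt hlt) (lt_irrefl _)
    obtain ⟨n, hn⟩ := ENNReal.exists_inv_nat_lt hd
    have h1 : α ≤ Φ T + (n : ℝ≥0∞)⁻¹ := tsub_le_iff_right.mp (hΦT_ge n)
    have h2 : Φ T + (n : ℝ≥0∞)⁻¹ < Φ T + (α - Φ T) :=
      ENNReal.add_lt_add_left ((hΦ_le_one T).trans_lt ENNReal.one_lt_top).ne hn
    rw [add_tsub_cancel_of_le hlt.le] at h2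
    exact absurd (h1.trans_lt h2) (lt_irrefl α)
  refine ⟨Msp T, Msp_isClosed T, Msp_separable hTc, ?_⟩
  intro y hy
  by_contra hae
  have hy0 : y ≠ 0 := by
    intro h
    exact hae (Filter.Eventually.of_forall fun ω => by simp [h])
  set yh : H := (‖y‖⁻¹ : ℝ) • y with hyh
  have hyh1 : ‖yh‖ = 1 := norm_smul_inv_norm hy0
  have hyhT : ∀ m ∈ Msp T, (inner ℝ yh m : ℝ) = 0 := fun m hm => by
    rw [hyh, real_inner_smul_left, hy m hm, mul_zero]
  have hA : μ {ω | ¬ (inner ℝ y (X ω) : ℝ) = 0} ≠ 0 := fun h => hae (ae_iff.mpr h)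
  set T' : Set H := T ∪ {yh} with hT'
  have hT'c : T'.Countable := hTc.union (Set.countable_singleton _)
  have hkey := fun ω => key_ineq T yh hyh1 hyhT (X ω)
  have hle : ∀ ω, ‖(orthogonalProjection (Msp T) (X ω) : H)‖
      ≤ ‖(orthogonalProjection (Msp T') (X ω) : H)‖ := fun ω =>
    norm_proj_mono (Msp_mono Set.subset_union_left) _
  have hstrict : ∀ ω, (inner ℝ y (X ω) : ℝ) ≠ 0 →
      ‖(orthogonalProjection (Msp T) (X ω) : H)‖
        < ‖(orthogonalProjection (Msp T') (X ω) : H)‖ := by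
    intro ω hc
    have hcy : (inner ℝ yh (X ω) : ℝ) ≠ 0 := by
      rw [hyh, real_inner_smul_left]
      exact mul_ne_zero (inv_ne_zero (norm_ne_zero_iff.mpr hy0)) hc
    have hcy2 : 0 < (inner ℝ yh (X ω) : ℝ) ^ 2 := by positivity
    nlinarith [hkey ω, norm_nonneg ((orthogonalProjection (Msp T) (X ω) : H)),
      norm_nonneg ((orthogonalProjection (Msp T') (X ω) : H))]
  have hmeasT' := meas_norm_proj X hX hT'c
  have hΦlt : Φ T < Φ T' := by
    refine lintegral_strict_mono_of_ae_le_of_ae_lt_on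
      (((hmeasT'.div (measurable_const.add hmeasT')).ennreal_ofReal).aemeasurable)
      ((hΦ_le_one T).trans_lt ENNReal.one_lt_top).ne
      (Filter.Eventually.of_forall fun ω =>
        ENNReal.ofReal_le_ofReal (psi_mono (norm_nonneg _) (hle ω)))
      hA
      (Filter.Eventually.of_forall fun ω hω => ?_)
    exact (ENNReal.ofReal_lt_ofReal_iff_of_nonneg
      (div_nonneg (norm_nonneg _) (by linarith [norm_nonneg ((orthogonalProjection (Msp T) (X ω) : H))]))).mpr
      (psi_strict (norm_nonneg _) (hstrict ω hω))
  have hT'le : Φ T' ≤ α := le_iSup_of_le ⟨T', hT'c⟩ le_rfl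
  exact lt_irrefl α ((hΦTα.trans_lt hΦlt).trans_le hT'le)
end
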